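/- Let p = 2 and n = 2a with a ≥ 2, and suppose λ ∈ P^A_2(n), i.e., D^λ↓_{A_n} = E^λ_+ ⊕ E^λ_−. If E^λ_+↓_{G_{a,2}} is irreducible, where G_{a,2} = (S_a ≀ S_2) ∩ A_n, then D^λ↓_{S_a ≀ S_2} is either irreducible or has exactly two composition factors which are isomorphic to each other; consequently D^λ↓_{S_a} has at most two isomorphism classes of composition factors. -/

import Mathlib

/-- `σ ∈ S_n` preserves the partition of `{0, …, n−1}` into blocks of size `a`
(block of `x` is `⌊x/a⌋`), i.e. `σ ∈ S_a ≀ S_b` where `n = ab`. -/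
def wreathPres (n a : ℕ) (σ : Equiv.Perm (Fin n)) : Prop :=
  ∀ x y : Fin n, ((x : ℕ) / a = (y : ℕ) / a) ↔ ((σ x : ℕ) / a = (σ y : ℕ) / a)

/-- `σ` lies in the copy of `S_a` permuting `{0, …, a−1}` and fixing all other points. -/
def saFix (n a : ℕ) (σ : Equiv.Perm (Fin n)) : Prop :=
  ∀ x : Fin n, a ≤ (x : ℕ) → σ x = x

namespace Stmt18

/-- `σ` fixes the first block pointwise. -/
def sbFix (n a : ℕ) (σ : Equiv.Perm (Fin n)) : Prop :=
  ∀ x : Fin n, (x : ℕ) < a → σ x = x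

/-- `σ` preserves each block. -/
def blockFix (n a : ℕ) (σ : Equiv.Perm (Fin n)) : Prop :=
  ∀ x : Fin n, ((σ x : ℕ)) / a = (x : ℕ) / a

variable {n a : ℕ} (ha : 2 ≤ a) (hn : n = 2 * a)

section basic
include ha hn

lemma blockVal (x : Fin n) : (x : ℕ) / a = if (x : ℕ) < a then 0 else 1 := by
  split
  · exact Nat.div_eq_of_lt ‹_›
  · have h1 : a ≤ (x:ℕ) := by omega
    have h2 : (x:ℕ) < 2 * a := by have := x.isLt; omega
    exact Nat.div_eq_of_lt_le (by omega) (by omega)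

lemma lt_iff_div (x : Fin n) : (x : ℕ) / a = 0 ↔ (x : ℕ) < a := by
  rw [blockVal ha hn]; split <;> simp_all

lemma blockVal' (x : Fin n) : (x:ℕ)/a = 0 ∨ (x:ℕ)/a = 1 := by
  rw [blockVal ha hn]; split <;> simp

end basic

lemma wreathPres_one : wreathPres n a 1 := fun x y => by simp

lemma wreathPres_mul {g h : Equiv.Perm (Fin n)} (hg : wreathPres n a g)
    (hh : wreathPres n a h) : wreathPres n a (g * h) := fun x y => by
  rw [hh x y, hg (h x) (h y)]; rfl

lemma wreathPres_inv {g : Equiv.Perm (Fin n)} (hg : wreathPres n a g) :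
    wreathPres n a g⁻¹ := fun x y => by
  conv_lhs => rw [show x = g (g⁻¹ x) by simp, show y = g (g⁻¹ y) by simp]
  exact (hg _ _).symm

/-- an injective map fixing the second block maps the first block into itself -/
lemma saFix_lt {g : Equiv.Perm (Fin n)} (hg : saFix n a g) {x : Fin n}
    (hx : (x:ℕ) < a) : ((g x : Fin n) : ℕ) < a := by
  by_contra h
  have h1 : g (g x) = g x := hg (g x) (by omega)
  have := g.injective h1
  rw [this] at h; omega

lemma sbFix_ge {g : Equiv.Perm (Fin n)} (hg : sbFix n a g) {x : Fin n}
    (hx : a ≤ (x:ℕ)) : a ≤ ((g x : Fin n) : ℕ) := by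
  by_contra h
  have h1 : g (g x) = g x := hg (g x) (by omega)
  have := g.injective h1
  rw [this] at h; omega

include ha hn in
lemma saFix_blockFix {g : Equiv.Perm (Fin n)} (hg : saFix n a g) : blockFix n a g := by
  intro x
  rcases lt_or_ge (x:ℕ) a with h | h
  · rw [blockVal ha hn, blockVal ha hn, if_pos h, if_pos (saFix_lt hg h)]
  · rw [hg x h]

include ha hn in
lemma sbFix_blockFix {g : Equiv.Perm (Fin n)} (hg : sbFix n a g) : blockFix n a g := by
  intro x
  rcases lt_or_ge (x:ℕ) a with h | h
  · rw [hg x h]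
  · rw [blockVal ha hn, blockVal ha hn, if_neg (by have := sbFix_ge hg h; omega), if_neg (by omega)]

lemma blockFix_wreathPres {g : Equiv.Perm (Fin n)} (hg : blockFix n a g) :
    wreathPres n a g := fun x y => by rw [hg x, hg y]

include ha hn in
lemma saFix_wreathPres {g : Equiv.Perm (Fin n)} (hg : saFix n a g) :
    wreathPres n a g := blockFix_wreathPres (saFix_blockFix ha hn hg)

include ha hn in
lemma sbFix_wreathPres {g : Equiv.Perm (Fin n)} (hg : sbFix n a g) :
    wreathPres n a g := blockFix_wreathPres (sbFix_blockFix ha hn hg)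

lemma saFix_inv {g : Equiv.Perm (Fin n)} (hg : saFix n a g) : saFix n a g⁻¹ := by
  intro x hx
  have := hg x hx
  conv_lhs => rw [← this]
  simp

lemma sbFix_inv {g : Equiv.Perm (Fin n)} (hg : sbFix n a g) : sbFix n a g⁻¹ := by
  intro x hx
  have := hg x hx
  conv_lhs => rw [← this]
  simp

lemma sbFix_one : sbFix n a 1 := fun x _ => rfl

/-- saFix and sbFix elements commute -/
lemma saFix_sbFix_comm {g h : Equiv.Perm (Fin n)} (hg : saFix n a g) (hh : sbFix n a h) :
    g * h = h * g := by
  ext x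
  simp only [Equiv.Perm.mul_apply]
  rcases lt_or_ge (x:ℕ) a with hx | hx
  · rw [hh x hx, hh (g x) (saFix_lt hg hx)]
  · rw [hg x hx, hg (h x) (sbFix_ge hh hx)]

instance sbFix.decidable (n a : ℕ) (σ : Equiv.Perm (Fin n)) : Decidable (sbFix n a σ) := by
  unfold sbFix; infer_instance

instance saFix.decidable (n a : ℕ) (σ : Equiv.Perm (Fin n)) : Decidable (saFix n a σ) := by
  unfold saFix; infer_instance

instance blockFix.decidable (n a : ℕ) (σ : Equiv.Perm (Fin n)) : Decidable (blockFix n a σ) := by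
  unfold blockFix; infer_instance

instance wreathPres.decidable (n a : ℕ) (σ : Equiv.Perm (Fin n)) : Decidable (wreathPres n a σ) := by
  unfold wreathPres; infer_instance

lemma blockFix_mul {g h : Equiv.Perm (Fin n)} (hg : blockFix n a g) (hh : blockFix n a h) :
    blockFix n a (g * h) := fun x => by
  have := hg (h x); have := hh x; simp only [Equiv.Perm.mul_apply]; omega

end Stmt18

namespace Stmt18B
open Stmt18

variable {n a : ℕ}

/-- the transposition (0 1) -/
def tau (ha : 2 ≤ a) (hn : n = 2 * a) : Equiv.Perm (Fin n) :=
  Equiv.swap ⟨0, by omega⟩ ⟨1, by omega⟩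

section tau
variable (ha : 2 ≤ a) (hn : n = 2 * a)

lemma tau_ne : (⟨0, by omega⟩ : Fin n) ≠ ⟨1, by omega⟩ := by
  intro h; exact absurd (congrArg Fin.val h) (by simp)

lemma tau_sign : Equiv.Perm.sign (tau ha hn) = -1 :=
  Equiv.Perm.sign_swap (tau_ne ha hn)

lemma tau_mul_self : tau ha hn * tau ha hn = 1 := Equiv.swap_mul_self _ _

lemma tau_blockFix : blockFix n a (tau ha hn) := by
  intro x
  unfold tau
  rcases eq_or_ne x ⟨0, by omega⟩ with h | h0
  · subst h; rw [Equiv.swap_apply_left]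
    show (1:ℕ)/a = (0:ℕ)/a
    rw [Nat.div_eq_of_lt (by omega : (1:ℕ) < a), Nat.div_eq_of_lt (by omega : (0:ℕ) < a)]
  rcases eq_or_ne x ⟨1, by omega⟩ with h | h1
  · subst h; rw [Equiv.swap_apply_right]
    show (0:ℕ)/a = (1:ℕ)/a
    rw [Nat.div_eq_of_lt (by omega : (1:ℕ) < a), Nat.div_eq_of_lt (by omega : (0:ℕ) < a)]
  · rw [Equiv.swap_apply_of_ne_of_ne h0 h1]

lemma tau_wreathPres : wreathPres n a (tau ha hn) :=
  blockFix_wreathPres (tau_blockFix ha hn)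

end tau

/-- the block swap x ↦ x ± a -/
def tau0fun (ha : 2 ≤ a) (hn : n = 2 * a) : Fin n → Fin n := fun x =>
  ⟨if (x:ℕ) < a then (x:ℕ) + a else (x:ℕ) - a, by have := x.isLt; split <;> omega⟩

section tau0
variable (ha : 2 ≤ a) (hn : n = 2 * a)

lemma tau0fun_val (x : Fin n) :
    ((tau0fun ha hn x : Fin n) : ℕ) = if (x:ℕ) < a then (x:ℕ) + a else (x:ℕ) - a := rfl

lemma tau0fun_invol : Function.Involutive (tau0fun ha hn) := by
  intro x
  apply Fin.ext
  rw [tau0fun_val, tau0fun_val]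
  have := x.isLt
  rcases lt_or_ge (x:ℕ) a with h | h
  · simp only [if_pos h]
    rw [if_neg (by omega)]
    omega
  · simp only [if_neg (not_lt.mpr h)]
    rw [if_pos (by omega)]
    omega

end tau0

def tau0 (ha : 2 ≤ a) (hn : n = 2 * a) : Equiv.Perm (Fin n) :=
  (tau0fun_invol ha hn).toPerm _

section tau0b
variable (ha : 2 ≤ a) (hn : n = 2 * a)

lemma tau0_apply (x : Fin n) :
    ((tau0 ha hn x : Fin n) : ℕ) = if (x:ℕ) < a then (x:ℕ) + a else (x:ℕ) - a := rfl

lemma tau0_mul_self : tau0 ha hn * tau0 ha hn = 1 := by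
  ext x
  exact congrArg Fin.val (tau0fun_invol ha hn x)

lemma tau0_block (x : Fin n) :
    ((tau0 ha hn x : Fin n) : ℕ) / a = if (x:ℕ) < a then 1 else 0 := by
  have hx := x.isLt
  rw [tau0_apply ha hn]
  rcases lt_or_ge (x:ℕ) a with h | h
  · rw [if_pos h, if_pos h]; exact Nat.div_eq_of_lt_le (by omega) (by omega)
  · rw [if_neg (by omega), if_neg (by omega)]; exact Nat.div_eq_of_lt (by omega)

lemma tau0_wreathPres : wreathPres n a (tau0 ha hn) := by
  intro x y
  rw [blockVal ha hn x, blockVal ha hn y]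
  constructor
  · intro h
    rw [tau0_block ha hn, tau0_block ha hn]
    rcases lt_or_ge (x:ℕ) a with h1 | h1 <;> rcases lt_or_ge (y:ℕ) a with h2 | h2 <;>
      first
        | (rw [if_pos h1, if_pos h2])
        | (rw [if_neg (not_lt.mpr h1), if_neg (not_lt.mpr h2)])
        | (exfalso; rw [if_pos ‹_›, if_neg (not_lt.mpr ‹_›)] at h <;> omega)
        | (exfalso; rw [if_neg (not_lt.mpr ‹_›), if_pos ‹_›] at h <;> omega)
  · intro h
    rw [tau0_block ha hn, tau0_block ha hn] at h
    rcases lt_or_ge (x:ℕ) a with h1 | h1 <;> rcases lt_or_ge (y:ℕ) a with h2 | h2 <;>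
      first
        | (rw [if_pos h1, if_pos h2])
        | (rw [if_neg (not_lt.mpr h1), if_neg (not_lt.mpr h2)])
        | (exfalso; rw [if_pos ‹_›, if_neg (not_lt.mpr ‹_›)] at h <;> omega)
        | (exfalso; rw [if_neg (not_lt.mpr ‹_›), if_pos ‹_›] at h <;> omega)

/-- dichotomy: a wreath element preserves blocks or does so after composing with tau0 -/
lemma wreath_dichotomy {g : Equiv.Perm (Fin n)} (hg : wreathPres n a g) :
    blockFix n a g ∨ blockFix n a (g * tau0 ha hn) := by
  have hzlt : ((⟨0, by omega⟩ : Fin n) : ℕ) = 0 := rfl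
  set z : Fin n := ⟨0, by omega⟩ with hzdef
  have hz0 : (z : ℕ) / a = 0 := by rw [hzlt]; exact Nat.div_eq_of_lt (by omega)
  rcases blockVal' ha hn (g z) with h0 | h1
  · left
    intro x
    rcases blockVal' ha hn x with hx | hx
    · have hq : (x:ℕ)/a = (z:ℕ)/a := by omega
      have := (hg x z).mp hq
      omega
    · have hne : ¬ ((x:ℕ)/a = (z:ℕ)/a) := by omega
      have hne2 : ¬ (((g x : Fin n)):ℕ)/a = ((g z : Fin n):ℕ)/a :=
        fun hc => hne ((hg x z).mpr hc)
      rcases blockVal' ha hn (g x) with h | h <;> omega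
  · right
    intro x
    simp only [Equiv.Perm.mul_apply]
    have htb := tau0_block ha hn x
    rcases blockVal' ha hn x with hx | hx
    · have hxa : (x:ℕ) < a := by rw [← lt_iff_div ha hn]; exact hx
      have h1' : ((tau0 ha hn x : Fin n):ℕ)/a ≠ (z:ℕ)/a := by
        rw [htb, if_pos hxa]; omega
      have hne2 : ¬ (((g (tau0 ha hn x) : Fin n)):ℕ)/a = ((g z : Fin n):ℕ)/a :=
        fun hc => h1' ((hg _ z).mpr hc)
      rcases blockVal' ha hn (g (tau0 ha hn x)) with h | h <;> omega
  
    · have hxa : ¬ (x:ℕ) < a := by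
        intro hc; rw [(lt_iff_div ha hn x).mpr hc] at hx; omega
      have h1' : ((tau0 ha hn x : Fin n):ℕ)/a = (z:ℕ)/a := by
        rw [htb, if_neg hxa]; omega
      have := (hg _ z).mp h1'
      omega

end tau0b

/-- the restriction of a block-preserving permutation to the first block,
extended by the identity -/
def firstPart (g : Equiv.Perm (Fin n)) (ha : 2 ≤ a) (hn : n = 2 * a)
    (hg : blockFix n a g) : Equiv.Perm (Fin n) where
  toFun x := if (x:ℕ) < a then g x else x
  invFun x := if (x:ℕ) < a then g⁻¹ x else x
  left_inv := by
    have hg' : blockFix n a g⁻¹ := by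
      intro y
      have := hg (g⁻¹ y)
      simp only [show ∀ (f : Equiv.Perm (Fin n)) y, f (f⁻¹ y) = y from fun f => f.apply_symm_apply] at this
      omega
    intro x
    by_cases h : (x:ℕ) < a
    · simp only [if_pos h]
      have hgx : ((g x : Fin n) : ℕ) < a := by
        have h2 := hg x
        rw [blockVal ha hn x, blockVal ha hn (g x), if_pos h] at h2
        by_contra hc
        rw [if_neg hc] at h2; omega
      rw [if_pos hgx]
      simp
    · simp only [if_neg h]
  right_inv := by
    have hg' : blockFix n a g⁻¹ := by
      intro y
      have := hg (g⁻¹ y)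
      simp only [show ∀ (f : Equiv.Perm (Fin n)) y, f (f⁻¹ y) = y from fun f => f.apply_symm_apply] at this
      omega
    intro x
    by_cases h : (x:ℕ) < a
    · simp only [if_pos h]
      have hgx : ((g⁻¹ x : Fin n) : ℕ) < a := by
        have h2 := hg' x
        rw [blockVal ha hn x, blockVal ha hn (g⁻¹ x), if_pos h] at h2
        by_contra hc
        rw [if_neg hc] at h2; omega
      rw [if_pos hgx]
      simp
    · simp only [if_neg h]

section fp
variable (ha : 2 ≤ a) (hn : n = 2 * a)

lemma firstPart_saFix {g : Equiv.Perm (Fin n)} (hg : blockFix n a g) :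
    saFix n a (firstPart g ha hn hg) := by
  intro x hx
  show (if (x:ℕ) < a then g x else x) = x
  rw [if_neg (by omega)]

lemma firstPart_apply_lt {g : Equiv.Perm (Fin n)} (hg : blockFix n a g) {x : Fin n}
    (hx : (x:ℕ) < a) : firstPart g ha hn hg x = g x := by
  show (if (x:ℕ) < a then g x else x) = g x
  rw [if_pos hx]

lemma firstPart_sbFix {g : Equiv.Perm (Fin n)} (hg : blockFix n a g) :
    sbFix n a (g * (firstPart g ha hn hg)⁻¹) := by
  intro x hx
  have hgx : ((g⁻¹ x : Fin n) : ℕ) < a := by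
    have hg' : blockFix n a g⁻¹ := by
      intro y
      have := hg (g⁻¹ y)
      simp only [show ∀ (f : Equiv.Perm (Fin n)) y, f (f⁻¹ y) = y from fun f => f.apply_symm_apply] at this
      omega
    have h2 := hg' x
    rw [blockVal ha hn x, blockVal ha hn (g⁻¹ x), if_pos hx] at h2
    by_contra hc
    rw [if_neg hc] at h2; omega
  have key : (firstPart g ha hn hg)⁻¹ x = g⁻¹ x := by
    apply (firstPart g ha hn hg).injective
    simp only [show ∀ (f : Equiv.Perm (Fin n)) y, f (f⁻¹ y) = y from fun f => f.apply_symm_apply]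
    rw [firstPart_apply_lt ha hn hg hgx]
    simp
  simp only [Equiv.Perm.mul_apply, key, show ∀ (f : Equiv.Perm (Fin n)) y, f (f⁻¹ y) = y from fun f => f.apply_symm_apply]

end fp
end Stmt18B

namespace Stmt18M

open Submodule

variable {F V : Type} [Field F] [AddCommGroup V] [Module F V]
variable {n : ℕ}

/-- invariance of a submodule under a set of permutations -/
def Stab (ρ : Representation F (Equiv.Perm (Fin n)) V)
    (P : Equiv.Perm (Fin n) → Prop) (W : Submodule F V) : Prop :=
  ∀ g, P g → ∀ v ∈ W, ρ g v ∈ W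

variable (ρ : Representation F (Equiv.Perm (Fin n)) V)
  {P : Equiv.Perm (Fin n) → Prop}

lemma Stab_bot : Stab ρ P (⊥ : Submodule F V) := by
  intro g hg v hv
  simp_all

lemma Stab_top : Stab ρ P (⊤ : Submodule F V) := by
  intro g hg v hv; trivial

lemma Stab_inf {W W' : Submodule F V} (h : Stab ρ P W) (h' : Stab ρ P W') :
    Stab ρ P (W ⊓ W') := fun g hg v hv => ⟨h g hg v hv.1, h' g hg v hv.2⟩

lemma Stab_sup {W W' : Submodule F V} (h : Stab ρ P W) (h' : Stab ρ P W') :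
    Stab ρ P (W ⊔ W') := by
  intro g hg v hv
  rw [Submodule.mem_sup] at hv ⊢
  obtain ⟨y, hy, z, hz, rfl⟩ := hv
  exact ⟨ρ g y, h g hg y hy, ρ g z, h' g hg z hz, (map_add _ _ _).symm⟩

lemma Stab_finsetSup {ι : Type} {T : Finset ι} {Wf : ι → Submodule F V}
    (h : ∀ i ∈ T, Stab ρ P (Wf i)) : Stab ρ P (T.sup Wf) := by
  classical
  induction T using Finset.induction_on with
  | empty => simpa using Stab_bot ρ
  | @insert j T' hj IH =>
    rw [Finset.sup_insert]
    exact Stab_sup ρ (h j (Finset.mem_insert_self _ _))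
      (IH fun i hi => h i (Finset.mem_insert_of_mem hi))

lemma map_finsetSup {ι : Type} (f : V →ₗ[F] V) (T : Finset ι) (Wf : ι → Submodule F V) :
    Submodule.map f (T.sup Wf) = T.sup (fun i => Submodule.map f (Wf i)) := by
  classical
  induction T using Finset.induction_on with
  | empty => simp
  | @insert j T' hj IH => rw [Finset.sup_insert, Finset.sup_insert, Submodule.map_sup, IH]

lemma Stab_map {f : V →ₗ[F] V} (hcomm : ∀ g, P g → ∀ v, f (ρ g v) = ρ g (f v))
    {W : Submodule F V} (h : Stab ρ P W) : Stab ρ P (Submodule.map f W) := by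
  intro g hg v hv
  obtain ⟨w, hw, rfl⟩ := hv
  exact ⟨ρ g w, h g hg w hw, hcomm g hg w⟩

/-- `P`-equivariant isomorphism of subquotients `A/B ≅ A'/B'`. -/
def IsoRel (A B A' B' : Submodule F V) : Prop :=
  ∃ e : (↥A ⧸ B.comap A.subtype) ≃ₗ[F] (↥A' ⧸ B'.comap A'.subtype),
    ∀ g : Equiv.Perm (Fin n), P g →
      ∀ (v w : V) (hv : v ∈ A) (hw : w ∈ A') (hv' : ρ g v ∈ A) (hw' : ρ g w ∈ A'),
        e (Submodule.Quotient.mk ⟨v, hv⟩) = Submodule.Quotient.mk ⟨w, hw⟩ →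
        e (Submodule.Quotient.mk ⟨ρ g v, hv'⟩) = Submodule.Quotient.mk ⟨ρ g w, hw'⟩

variable (P)

lemma buildIso (f : V →ₗ[F] V) (A B A' B' : Submodule F V)
    (hBA : B ≤ A) (hBA' : B' ≤ A')
    (h1 : ∀ x ∈ A, f x ∈ A')
    (h2 : ∀ x ∈ A, (f x ∈ B' ↔ x ∈ B))
    (h3 : ∀ y ∈ A', ∃ x ∈ A, f x - y ∈ B')
    (hB' : Stab ρ P B')
    (hcomm : ∀ g, P g → ∀ v, f (ρ g v) = ρ g (f v)) :
    IsoRel ρ (P := P) A B A' B' := by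
  classical
  set F1 : ↥A →ₗ[F] (↥A' ⧸ B'.comap A'.subtype) :=
    (B'.comap A'.subtype).mkQ.comp (f.restrict h1) with hF1
  have hF1app : ∀ (x : ↥A), F1 x = Submodule.Quotient.mk ⟨f ↑x, h1 ↑x x.2⟩ := by
    intro x; rfl
  have hker : LinearMap.ker F1 = B.comap A.subtype := by
    ext x
    rw [LinearMap.mem_ker, hF1app, Submodule.Quotient.mk_eq_zero, Submodule.mem_comap]
    simp only [Submodule.subtype_apply]
    rw [h2 ↑x x.2, Submodule.mem_comap, Submodule.subtype_apply]
  have hle : B.comap A.subtype ≤ LinearMap.ker F1 := le_of_eq hker.symm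
  set e0 := (B.comap A.subtype).liftQ F1 hle with he0
  have hinj : Function.Injective e0 := by
    rw [← LinearMap.ker_eq_bot]
    exact Submodule.ker_liftQ_eq_bot _ _ _ (le_of_eq hker)
  have hsurj : Function.Surjective e0 := by
    intro z
    obtain ⟨y, rfl⟩ := Submodule.Quotient.mk_surjective _ z
    obtain ⟨x, hx, hdiff⟩ := h3 ↑y y.2
    refine ⟨Submodule.Quotient.mk ⟨x, hx⟩, ?_⟩
    rw [Submodule.liftQ_apply, hF1app]
    rw [Submodule.Quotient.eq]
    rw [Submodule.mem_comap]
    simpa using hdiff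
  refine ⟨LinearEquiv.ofBijective e0 ⟨hinj, hsurj⟩, ?_⟩
  have happ : ∀ (x : V) (hx : x ∈ A),
      (LinearEquiv.ofBijective e0 ⟨hinj, hsurj⟩) (Submodule.Quotient.mk ⟨x, hx⟩)
        = Submodule.Quotient.mk ⟨f x, h1 x hx⟩ := by
    intro x hx
    show e0 (Submodule.Quotient.mk ⟨x, hx⟩) = _
    rw [Submodule.liftQ_apply, hF1app]
  intro g hg v w hv hw hv' hw' hyp
  rw [happ] at hyp
  rw [Submodule.Quotient.eq, Submodule.mem_comap] at hyp
  simp only [Submodule.subtype_apply] at hyp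
  have hyp' : f v - w ∈ B' := by simpa using hyp
  rw [happ, Submodule.Quotient.eq, Submodule.mem_comap]
  simp only [Submodule.subtype_apply]
  have : f (ρ g v) - ρ g w ∈ B' := by
    rw [hcomm g hg v, ← map_sub]
    exact hB' g hg _ hyp'
  simpa using this

variable {P}

lemma IsoRel_symm {A B A' B' : Submodule F V}
    (h : IsoRel ρ (P := P) A B A' B') : IsoRel ρ (P := P) A' B' A B := by
  obtain ⟨e, he⟩ := h
  refine ⟨e.symm, ?_⟩
  intro g hg v w hv hw hv' hw' hyp
  have h0 : e (Submodule.Quotient.mk ⟨w, hw⟩) = Submodule.Quotient.mk ⟨v, hv⟩ := by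
    rw [← hyp]; simp
  have h1 := he g hg w v hw hv hw' hv' h0
  rw [← h1]; simp

lemma IsoRel_trans {A B A' B' A'' B'' : Submodule F V} (hmid : Stab ρ P A')
    (h1 : IsoRel ρ (P := P) A B A' B') (h2 : IsoRel ρ (P := P) A' B' A'' B'') :
    IsoRel ρ (P := P) A B A'' B'' := by
  obtain ⟨e1, he1⟩ := h1
  obtain ⟨e2, he2⟩ := h2
  refine ⟨e1.trans e2, ?_⟩
  intro g hg v w hv hw hv' hw' hyp
  obtain ⟨u', hu'⟩ := Submodule.Quotient.mk_surjective _ (e1 (Submodule.Quotient.mk ⟨v, hv⟩))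
  obtain ⟨u, hu⟩ := u'
  have s1 : e1 (Submodule.Quotient.mk ⟨v, hv⟩) = Submodule.Quotient.mk ⟨u, hu⟩ := hu'.symm
  have s1g : e1 (Submodule.Quotient.mk ⟨ρ g v, hv'⟩)
      = Submodule.Quotient.mk ⟨ρ g u, hmid g hg u hu⟩ :=
    he1 g hg v u hv hu hv' (hmid g hg u hu) s1
  have s2 : e2 (Submodule.Quotient.mk ⟨u, hu⟩) = Submodule.Quotient.mk ⟨w, hw⟩ := by
    rw [← s1]; exact hyp
  have s2g := he2 g hg u w hu hw (hmid g hg u hu) hw' s2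
  show e2 (e1 (Submodule.Quotient.mk ⟨ρ g v, hv'⟩)) = _
  rw [s1g, s2g]

/-- a simple subquotient of a finite sup of `P`-simple submodules is isomorphic to one
of them -/
lemma noetherIso (A E : Submodule F V) (hA : Stab ρ P A) (hE : Stab ρ P E) :
    IsoRel ρ (P := P) A (A ⊓ E) (A ⊔ E) E := by
  refine buildIso ρ P LinearMap.id A (A ⊓ E) (A ⊔ E) E inf_le_left le_sup_right
    (fun x hx => le_sup_left (α := Submodule F V) hx) ?_ ?_ hE (fun g hg v => by simp)
  · intro x hx
    simp only [LinearMap.id_apply]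
    exact ⟨fun h => ⟨hx, h⟩, fun h => h.2⟩
  · intro y hy
    rw [Submodule.mem_sup] at hy
    obtain ⟨xa, hxa, xe, hxe, rfl⟩ := hy
    refine ⟨xa, hxa, ?_⟩
    simpa using neg_mem hxe

lemma L1 {ι : Type} (A B : Submodule F V)
    (hInvA : Stab ρ P A) (hInvB : Stab ρ P B)
    (hBA : B ≤ A) (hne : B ≠ A)
    (hsimp : ∀ W, Stab ρ P W → B ≤ W → W ≤ A → W = B ∨ W = A)
    (T : Finset ι) (Wf : ι → Submodule F V)
    (hWinv : ∀ i ∈ T, Stab ρ P (Wf i))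
    (hWatom : ∀ i ∈ T, ∀ Y ≤ Wf i, Stab ρ P Y → Y = ⊥ ∨ Y = Wf i)
    (hle : A ≤ B ⊔ T.sup Wf) :
    ∃ i ∈ T, Wf i ≠ ⊥ ∧ IsoRel ρ (P := P) A B (Wf i) ⊥ := by
  classical
  induction T using Finset.induction_on with
  | empty =>
    rw [Finset.sup_empty, sup_bot_eq] at hle
    exact absurd (le_antisymm hBA hle) hne
  | @insert j T' hjT' IH =>
    have hWinv' : ∀ i ∈ T', Stab ρ P (Wf i) :=
      fun i hi => hWinv i (Finset.mem_insert_of_mem hi)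
    have hWatom' : ∀ i ∈ T', ∀ Y ≤ Wf i, Stab ρ P Y → Y = ⊥ ∨ Y = Wf i :=
      fun i hi => hWatom i (Finset.mem_insert_of_mem hi)
    have hWjinv : Stab ρ P (Wf j) := hWinv j (Finset.mem_insert_self _ _)
    set E := B ⊔ T'.sup Wf with hE
    have hEinv : Stab ρ P E := Stab_sup ρ hInvB (Stab_finsetSup ρ hWinv')
    have hAE : A ≤ E ⊔ Wf j := by
      rw [Finset.sup_insert] at hle
      calc A ≤ B ⊔ (Wf j ⊔ T'.sup Wf) := hle
        _ = E ⊔ Wf j := by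
            rw [hE, sup_comm (Wf j) (T'.sup Wf), ← sup_assoc]
    have hD : A ⊓ E = B ∨ A ⊓ E = A :=
      hsimp (A ⊓ E) (Stab_inf ρ hInvA hEinv) (le_inf hBA le_sup_left) inf_le_left
    rcases hD with hD | hD
    · -- A ⊓ E = B
      have hnotAE : ¬ A ≤ E := by
        intro hc
        exact hne (by rw [← hD, inf_eq_left.mpr hc])
      by_cases hWj : Wf j = ⊥
      · rw [hWj, sup_bot_eq] at hAE
        exact absurd hAE hnotAE
      rcases hWatom j (Finset.mem_insert_self _ _) (Wf j ⊓ E) inf_le_left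
        (Stab_inf ρ hWjinv hEinv) with hWE | hWE
      · -- Wf j ⊓ E = ⊥
        rcases hWatom j (Finset.mem_insert_self _ _) (Wf j ⊓ (E ⊔ A)) inf_le_left
          (Stab_inf ρ hWjinv (Stab_sup ρ hEinv hInvA)) with hA1 | hA1
        · exfalso
          apply hnotAE
          have h5 : A ≤ (E ⊔ Wf j) ⊓ (E ⊔ A) := le_inf hAE le_sup_right
          rwa [sup_inf_assoc_of_le (Wf j) le_sup_left, hA1, sup_bot_eq] at h5
        · -- main case
          have hiso1 : IsoRel ρ (P := P) A B (A ⊔ E) E := by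
            have h6 := noetherIso ρ A E hInvA hEinv
            rwa [hD] at h6
          have heq : Wf j ⊔ E = A ⊔ E := by
            apply le_antisymm
            · have h7 : Wf j ≤ E ⊔ A := by
                conv_lhs => rw [← hA1]
                exact inf_le_right
              rw [sup_comm A E]
              exact sup_le h7 le_sup_left
            · rw [sup_comm A E, sup_comm (Wf j) E]
              exact sup_le le_sup_left (hAE.trans (by rw [sup_comm]))
          have hiso2 : IsoRel ρ (P := P) (Wf j) ⊥ (A ⊔ E) E := by
            have h6 := noetherIso ρ (Wf j) E hWjinv hEinv
            rwa [hWE, heq] at h6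
          exact ⟨j, Finset.mem_insert_self _ _, hWj,
            IsoRel_trans ρ (Stab_sup ρ hInvA hEinv) hiso1 (IsoRel_symm ρ hiso2)⟩
      · -- Wf j ≤ E : contradiction
        exfalso
        apply hnotAE
        have hWjE : Wf j ≤ E := by rw [← hWE]; exact inf_le_right
        exact hAE.trans (sup_le le_rfl hWjE)
    · -- A ⊓ E = A, i.e. A ≤ E
      have hAE' : A ≤ B ⊔ T'.sup Wf := by
        rw [← hE, ← hD]; exact inf_le_right
      obtain ⟨i, hi, h1, h2⟩ := IH hWinv' hWatom' hAE'
      exact ⟨i, Finset.mem_insert_of_mem hi, h1, h2⟩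

/-- existence of minimal invariant submodules -/
lemma exists_minimal [FiniteDimensional F V] (X : Submodule F V)
    (hX : Stab ρ P X) (hb : X ≠ ⊥) :
    ∃ S, S ≤ X ∧ Stab ρ P S ∧ S ≠ ⊥ ∧ (∀ Y, Y ≤ S → Stab ρ P Y → Y ≠ ⊥ → Y = S) := by
  classical
  suffices h : ∀ k (X : Submodule F V), Module.finrank F X ≤ k → Stab ρ P X → X ≠ ⊥ →
      ∃ S, S ≤ X ∧ Stab ρ P S ∧ S ≠ ⊥ ∧ (∀ Y, Y ≤ S → Stab ρ P Y → Y ≠ ⊥ → Y = S) by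
    exact h (Module.finrank F X) X le_rfl hX hb
  intro k
  induction k with
  | zero =>
    intro X hr hX hb
    exact absurd (Submodule.finrank_eq_zero.mp (Nat.le_zero.mp hr)) hb
  | succ k IH =>
    intro X hr hX hb
    by_cases hmin : ∀ Y, Y ≤ X → Stab ρ P Y → Y ≠ ⊥ → Y = X
    · exact ⟨X, le_rfl, hX, hb, hmin⟩
    · push_neg at hmin
      obtain ⟨Y, hYX, hYinv, hYb, hYne⟩ := hmin
      have hlt : Y < X := lt_of_le_of_ne hYX hYne
      have hrk : Module.finrank F Y < Module.finrank F X :=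
        Submodule.finrank_lt_finrank_of_lt hlt
      obtain ⟨S, hS1, hS2, hS3, hS4⟩ := IH Y (by omega) hYinv hYb
      exact ⟨S, hS1.trans hYX, hS2, hS3, hS4⟩

end Stmt18M
-- PART TWO : generic additions
namespace Stmt18M
open Submodule

variable {F V : Type} [Field F] [AddCommGroup V] [Module F V]
variable {n : ℕ}
variable (ρ : Representation F (Equiv.Perm (Fin n)) V)
  {P : Equiv.Perm (Fin n) → Prop}

lemma map_rho_mul (g h : Equiv.Perm (Fin n)) (W : Submodule F V) :
    Submodule.map (ρ (g * h)) W = Submodule.map (ρ g) (Submodule.map (ρ h) W) := by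
  rw [map_mul, Module.End.mul_eq_comp, Submodule.map_comp]

lemma map_rho_one (W : Submodule F V) : Submodule.map (ρ 1) W = W := by
  rw [map_one, Module.End.one_eq_id, Submodule.map_id]

lemma map_rho_inv_map (g : Equiv.Perm (Fin n)) (W : Submodule F V) :
    Submodule.map (ρ g⁻¹) (Submodule.map (ρ g) W) = W := by
  rw [← map_rho_mul, inv_mul_cancel, map_rho_one]

lemma map_rho_map_inv (g : Equiv.Perm (Fin n)) (W : Submodule F V) :
    Submodule.map (ρ g) (Submodule.map (ρ g⁻¹) W) = W := by
  rw [← map_rho_mul, mul_inv_cancel, map_rho_one]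

lemma rho_inj (g : Equiv.Perm (Fin n)) {v : V} (h : ρ g v = 0) : v = 0 := by
  have h2 : ρ g⁻¹ (ρ g v) = ρ g⁻¹ 0 := congrArg _ h
  rwa [map_zero, ← Module.End.mul_apply, ← map_mul, inv_mul_cancel, map_one,
    Module.End.one_apply] at h2

lemma rho_inv_apply (g : Equiv.Perm (Fin n)) (v : V) : ρ g⁻¹ (ρ g v) = v := by
  rw [← Module.End.mul_apply, ← map_mul, inv_mul_cancel, map_one, Module.End.one_apply]

lemma rho_apply_inv (g : Equiv.Perm (Fin n)) (v : V) : ρ g (ρ g⁻¹ v) = v := by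
  rw [← Module.End.mul_apply, ← map_mul, mul_inv_cancel, map_one, Module.End.one_apply]

lemma map_le_of_inv {W : Submodule F V} (h : Stab ρ P W) {g : Equiv.Perm (Fin n)} (hg : P g) :
    Submodule.map (ρ g) W ≤ W := by
  rintro _ ⟨w, hw, rfl⟩
  exact h g hg w hw

lemma map_eq_of_inv {W : Submodule F V} (h : Stab ρ P W) {g : Equiv.Perm (Fin n)}
    (hg : P g) (hg' : P g⁻¹) : Submodule.map (ρ g) W = W := by
  apply le_antisymm (map_le_of_inv ρ h hg)
  intro w hw
  have h1 : ρ g⁻¹ w ∈ W := h g⁻¹ hg' w hw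
  refine ⟨ρ g⁻¹ w, h1, ?_⟩
  rw [← Module.End.mul_apply, ← map_mul, mul_inv_cancel, map_one, Module.End.one_apply]

lemma map_ne_bot {W : Submodule F V} (h : W ≠ ⊥) (g : Equiv.Perm (Fin n)) :
    Submodule.map (ρ g) W ≠ ⊥ := by
  obtain ⟨x, hx, hx0⟩ := (Submodule.ne_bot_iff W).mp h
  rw [Submodule.ne_bot_iff]
  exact ⟨ρ g x, ⟨x, hx, rfl⟩, fun hc => hx0 (rho_inj ρ g hc)⟩

lemma Stab_comap {f : V →ₗ[F] V} (hcomm : ∀ g, P g → ∀ v, f (ρ g v) = ρ g (f v))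
    {W : Submodule F V} (h : Stab ρ P W) : Stab ρ P (Submodule.comap f W) := by
  intro g hg v hv
  rw [Submodule.mem_comap, hcomm g hg]
  exact h g hg _ hv

end Stmt18M
-- Clifford layer
namespace Stmt18C
open Stmt18 Stmt18B Stmt18M Submodule

variable {n a : ℕ}

lemma blockFix_one : blockFix n a 1 := fun _ => rfl

lemma blockFix_conj_tau0 (ha : 2 ≤ a) (hn : n = 2 * a) {g : Equiv.Perm (Fin n)}
    (hg : blockFix n a g) : blockFix n a (tau0 ha hn * g * tau0 ha hn) := by
  intro x
  simp only [Equiv.Perm.mul_apply]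
  have hx := x.isLt
  have e1 := tau0_block ha hn x
  have e2 := hg (tau0 ha hn x)
  have e3 := tau0_block ha hn (g (tau0 ha hn x))
  have e4 := blockVal ha hn x
  have e5 := blockVal ha hn (g (tau0 ha hn x))
  rcases lt_or_ge (x : ℕ) a with h | h
  · rw [if_pos h] at e1
    rw [if_pos h] at e4
    have h6 : ¬ ((g (tau0 ha hn x) : Fin n) : ℕ) < a := by
      intro hc
      rw [if_pos hc] at e5
      omega
    rw [if_neg h6] at e3
    omega
  · rw [if_neg (by omega)] at e1
    rw [if_neg (by omega)] at e4
    have h6 : ((g (tau0 ha hn x) : Fin n) : ℕ) < a := by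
      by_contra hc
      rw [if_neg hc] at e5
      omega
    rw [if_pos h6] at e3
    omega

variable {F V : Type} [Field F] [AddCommGroup V] [Module F V]
variable (ρ : Representation F (Equiv.Perm (Fin n)) V)

/-- double Clifford decomposition of a wreath-simple invariant submodule -/
lemma clayer (ha : 2 ≤ a) (hn : n = 2 * a) [FiniteDimensional F V]
    (X : Submodule F V)
    (hXinv : ∀ g : Equiv.Perm (Fin n), wreathPres n a g → ∀ v ∈ X, ρ g v ∈ X)
    (hXb : X ≠ ⊥)
    (hXsimp : ∀ Y : Submodule F V, Y ≤ X →
      (∀ g : Equiv.Perm (Fin n), wreathPres n a g → ∀ v ∈ Y, ρ g v ∈ Y) → Y = ⊥ ∨ Y = X) :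
    ∃ SS : Bool → Submodule F V,
      (∀ b, Stab ρ (saFix n a) (SS b)) ∧
      (∀ b, SS b ≠ ⊥) ∧
      (∀ b, ∀ Y ≤ SS b, Stab ρ (saFix n a) Y → Y ≠ ⊥ → Y = SS b) ∧
      X = Finset.univ.sup (fun p : Equiv.Perm (Fin n) × Bool =>
        if sbFix n a p.1 then Submodule.map (ρ p.1) (SS p.2) else ⊥) ∧
      (∀ p : Equiv.Perm (Fin n) × Bool,
        Stab ρ (saFix n a) (if sbFix n a p.1 then Submodule.map (ρ p.1) (SS p.2) else ⊥)) ∧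
      (∀ p : Equiv.Perm (Fin n) × Bool,
        ∀ Y ≤ (if sbFix n a p.1 then Submodule.map (ρ p.1) (SS p.2) else ⊥),
          Stab ρ (saFix n a) Y →
          Y = ⊥ ∨ Y = (if sbFix n a p.1 then Submodule.map (ρ p.1) (SS p.2) else ⊥)) ∧
      (∀ p : Equiv.Perm (Fin n) × Bool, sbFix n a p.1 →
        IsoRel ρ (P := saFix n a) (Submodule.map (ρ p.1) (SS p.2)) ⊥ (SS p.2) ⊥) := by
  classical
  set τ0 : Equiv.Perm (Fin n) := tau0 ha hn with hτ0def
  have hτ0τ0 : τ0 * τ0 = 1 := tau0_mul_self ha hn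
  have hτ0w : wreathPres n a τ0 := tau0_wreathPres ha hn
  have hmapτ0τ0 : ∀ W : Submodule F V, Submodule.map (ρ τ0) (Submodule.map (ρ τ0) W) = W := by
    intro W
    rw [← map_rho_mul, hτ0τ0, map_rho_one]
  -- minimal base-invariant submodule
  have hXinvB : Stab ρ (blockFix n a) X := fun g hg => hXinv g (blockFix_wreathPres hg)
  obtain ⟨S, hSX, hSinv, hSb, hSmin⟩ :=
    exists_minimal ρ (P := blockFix n a) X hXinvB hXb
  set S' : Submodule F V := Submodule.map (ρ τ0) S with hS'def
  have hS'b : S' ≠ ⊥ := map_ne_bot ρ hSb τ0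
  have hS'X : S' ≤ X := by
    rintro _ ⟨s, hs, rfl⟩
    exact hXinv τ0 hτ0w s (hSX hs)
  have hconjinv : ∀ W : Submodule F V, Stab ρ (blockFix n a) W →
      Stab ρ (blockFix n a) (Submodule.map (ρ τ0) W) := by
    intro W hW g hg v hv
    obtain ⟨w, hw, rfl⟩ := hv
    refine ⟨ρ (τ0 * g * τ0) w, hW _ (blockFix_conj_tau0 ha hn hg) w hw, ?_⟩
    rw [← Module.End.mul_apply, ← map_mul, ← Module.End.mul_apply, ← map_mul]
    have heq : τ0 * (τ0 * g * τ0) = g * τ0 := by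
      rw [← mul_assoc, ← mul_assoc, hτ0τ0, one_mul]
    rw [heq]
  have hS'inv : Stab ρ (blockFix n a) S' := hconjinv S hSinv
  have hS'min : ∀ Y ≤ S', Stab ρ (blockFix n a) Y → Y ≠ ⊥ → Y = S' := by
    intro Y hY hYinv hYb
    have h1 : Submodule.map (ρ τ0) Y ≤ S := by
      have h2 := Submodule.map_mono (f := ρ τ0) hY
      rwa [hS'def, hmapτ0τ0] at h2
    have h3 := hSmin _ h1 (hconjinv Y hYinv) (map_ne_bot ρ hYb τ0)
    have h4 := congrArg (Submodule.map (ρ τ0)) h3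
    rwa [hmapτ0τ0] at h4
  -- minimal saFix-invariant submodules
  have hSinvH : Stab ρ (saFix n a) S := fun g hg => hSinv g (saFix_blockFix ha hn hg)
  have hS'invH : Stab ρ (saFix n a) S' := fun g hg => hS'inv g (saFix_blockFix ha hn hg)
  obtain ⟨S1, hS1S, hS1inv, hS1b, hS1min⟩ :=
    exists_minimal ρ (P := saFix n a) S hSinvH hSb
  obtain ⟨S2, hS2S', hS2inv, hS2b, hS2min⟩ :=
    exists_minimal ρ (P := saFix n a) S' hS'invH hS'b
  set SS : Bool → Submodule F V := fun b => if b then S1 else S2 with hSSdef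
  have hSSinv : ∀ b, Stab ρ (saFix n a) (SS b) := by
    intro b; cases b <;> simpa [hSSdef] using (by assumption : Stab ρ (saFix n a) _)
  have hSSb : ∀ b, SS b ≠ ⊥ := by
    intro b; cases b
    · simpa [hSSdef] using hS2b
    · simpa [hSSdef] using hS1b
  have hSSmin : ∀ b, ∀ Y ≤ SS b, Stab ρ (saFix n a) Y → Y ≠ ⊥ → Y = SS b := by
    intro b; cases b
    · simpa [hSSdef] using hS2min
    · simpa [hSSdef] using hS1min
  have hSSle : ∀ b, SS b ≤ (if b then S else S') := by
    intro b; cases b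
    · simpa [hSSdef] using hS2S'
    · simpa [hSSdef] using hS1S
  -- base Clifford decompositions
  have hZgen : ∀ (T T' : Submodule F V), T' ≤ T → T' ≠ ⊥ → Stab ρ (saFix n a) T' →
      Stab ρ (blockFix n a) T →
      (∀ Z ≤ T, Stab ρ (blockFix n a) Z → Z ≠ ⊥ → Z = T) →
      Finset.univ.sup (fun b' : Equiv.Perm (Fin n) =>
        if blockFix n a b' then Submodule.map (ρ b') T' else ⊥) = T := by
    intro T T' hT'T hT'b hT'inv hTinv hTmin
    set Z := Finset.univ.sup (fun b' : Equiv.Perm (Fin n) =>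
      if blockFix n a b' then Submodule.map (ρ b') T' else ⊥) with hZdef
    have hZle : Z ≤ T := by
      apply Finset.sup_le
      intro b' _
      by_cases hb' : blockFix n a b'
      · rw [if_pos hb']
        exact (Submodule.map_mono hT'T).trans (map_le_of_inv ρ hTinv hb')
      · rw [if_neg hb']
        exact bot_le
    have hZb : Z ≠ ⊥ := by
      intro hc
      apply hT'b
      rw [eq_bot_iff, ← hc]
      have h1 : (if blockFix n a (1 : Equiv.Perm (Fin n))
          then Submodule.map (ρ 1) T' else ⊥) ≤ Z :=
        Finset.le_sup (f := fun b' : Equiv.Perm (Fin n) =>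
          if blockFix n a b' then Submodule.map (ρ b') T' else ⊥) (Finset.mem_univ 1)
      rwa [if_pos blockFix_one, map_rho_one] at h1
    have hZinv : Stab ρ (blockFix n a) Z := by
      intro g hg v hv
      suffices h : Submodule.map (ρ g) Z ≤ Z from h ⟨v, hv, rfl⟩
      rw [hZdef, map_finsetSup]
      apply Finset.sup_le
      intro b' _
      by_cases hb' : blockFix n a b'
      · rw [if_pos hb', ← map_rho_mul]
        have h2 : (if blockFix n a (g * b')
            then Submodule.map (ρ (g * b')) T' else ⊥) ≤ Z :=
          Finset.le_sup (f := fun b' : Equiv.Perm (Fin n) =>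
            if blockFix n a b' then Submodule.map (ρ b') T' else ⊥)
            (Finset.mem_univ (g * b'))
        rwa [if_pos (blockFix_mul hg hb')] at h2
      · rw [if_neg hb']
        simp
    exact hTmin Z hZle hZinv hZb
  have hZ1 : Finset.univ.sup (fun b' : Equiv.Perm (Fin n) =>
      if blockFix n a b' then Submodule.map (ρ b') S1 else ⊥) = S :=
    hZgen S S1 hS1S hS1b hS1inv hSinv hSmin
  have hZ2 : Finset.univ.sup (fun b' : Equiv.Perm (Fin n) =>
      if blockFix n a b' then Submodule.map (ρ b') S2 else ⊥) = S' :=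
    hZgen S' S2 hS2S' hS2b hS2inv hS'inv hS'min
  -- the sbFix × Bool family
  set Yfam : Equiv.Perm (Fin n) × Bool → Submodule F V := fun p =>
    if sbFix n a p.1 then Submodule.map (ρ p.1) (SS p.2) else ⊥ with hYfamdef
  have hYfam_pos : ∀ (d : Equiv.Perm (Fin n)) (b : Bool), sbFix n a d →
      Yfam (d, b) = Submodule.map (ρ d) (SS b) := by
    intro d b hd
    simp only [hYfamdef]
    rw [if_pos hd]
  have hYfam_neg : ∀ (d : Equiv.Perm (Fin n)) (b : Bool), ¬ sbFix n a d →
      Yfam (d, b) = ⊥ := by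
    intro d b hd
    simp only [hYfamdef]
    rw [if_neg hd]
  set Y := Finset.univ.sup Yfam with hYdef
  have hterm_le : ∀ (d : Equiv.Perm (Fin n)) (b : Bool), sbFix n a d →
      Submodule.map (ρ d) (SS b) ≤ Y := by
    intro d b hd
    have h1 : Yfam (d, b) ≤ Y := Finset.le_sup (f := Yfam) (Finset.mem_univ (d, b))
    rwa [hYfam_pos d b hd] at h1
  have hC3b : ∀ g : Equiv.Perm (Fin n), blockFix n a g → ∀ b : Bool,
      Submodule.map (ρ g) (SS b) ≤ Y := by
    intro g hg b
    have hcsa : saFix n a (firstPart g ha hn hg) := firstPart_saFix ha hn hg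
    have hdsb : sbFix n a (g * (firstPart g ha hn hg)⁻¹) := firstPart_sbFix ha hn hg
    have h2 : Submodule.map (ρ g) (SS b)
        = Submodule.map (ρ (g * (firstPart g ha hn hg)⁻¹)) (SS b) := by
      rw [map_rho_mul, map_eq_of_inv ρ (hSSinv b) (saFix_inv hcsa)
        (by rw [inv_inv]; exact hcsa)]
    rw [h2]
    exact hterm_le _ b hdsb
  have hC3 : ∀ g : Equiv.Perm (Fin n), wreathPres n a g → ∀ b : Bool,
      Submodule.map (ρ g) (SS b) ≤ Y := by
    intro g hg b
    rcases wreath_dichotomy ha hn hg with hbf | hbf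
    · exact hC3b g hbf b
    · have hgeq : g = (g * τ0) * τ0 := by rw [mul_assoc, hτ0τ0, mul_one]
      have h1 : Submodule.map (ρ g) (SS b)
          = Submodule.map (ρ (g * τ0)) (Submodule.map (ρ τ0) (SS b)) := by
        rw [← map_rho_mul, ← hgeq]
      rw [h1]
      have h2 : Submodule.map (ρ τ0) (SS b) ≤ Finset.univ.sup
          (fun b' : Equiv.Perm (Fin n) =>
            if blockFix n a b' then Submodule.map (ρ b') (SS (!b)) else ⊥) := by
      -- map ρ τ0 (SS b) ≤ if b then S' else S = sup translates of SS (!b)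
        cases b
        · -- SS false = S2 ≤ S', map ρτ0 S' = S = Z1 with SS (!false) = SS true = S1
          have h3 : Submodule.map (ρ τ0) S2 ≤ Submodule.map (ρ τ0) S' :=
            Submodule.map_mono hS2S'
          rw [hS'def, hmapτ0τ0] at h3
          have h4 : (SS (!false)) = S1 := by simp [hSSdef]
          rw [h4, hZ1]
          simpa [hSSdef] using h3
        · have h3 : Submodule.map (ρ τ0) S1 ≤ Submodule.map (ρ τ0) S :=
            Submodule.map_mono hS1S
          rw [← hS'def] at h3
          have h4 : (SS (!true)) = S2 := by simp [hSSdef]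
          rw [h4, hZ2]
          simpa [hSSdef] using h3
      calc Submodule.map (ρ (g * τ0)) (Submodule.map (ρ τ0) (SS b))
          ≤ Submodule.map (ρ (g * τ0)) (Finset.univ.sup
              (fun b' : Equiv.Perm (Fin n) =>
                if blockFix n a b' then Submodule.map (ρ b') (SS (!b)) else ⊥)) :=
            Submodule.map_mono h2
        _ ≤ Y := by
            rw [map_finsetSup]
            apply Finset.sup_le
            intro b' _
            by_cases hb' : blockFix n a b'
            · rw [if_pos hb', ← map_rho_mul]
              exact hC3b _ (blockFix_mul hbf hb') (!b)
            · rw [if_neg hb']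
              simp
  have hSSX : ∀ b, SS b ≤ X := by
    intro b; cases b
    · simpa [hSSdef] using hS2S'.trans hS'X
    · simpa [hSSdef] using hS1S.trans hSX
  have hYle : Y ≤ X := by
    apply Finset.sup_le
    intro p _
    by_cases hp : sbFix n a p.1
    · have h1 : Yfam p = Submodule.map (ρ p.1) (SS p.2) := hYfam_pos p.1 p.2 hp
      rw [h1]
      calc Submodule.map (ρ p.1) (SS p.2) ≤ Submodule.map (ρ p.1) X :=
            Submodule.map_mono (hSSX p.2)
        _ ≤ X := map_le_of_inv ρ (P := wreathPres n a) hXinv (sbFix_wreathPres ha hn hp)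
    · rw [hYfam_neg p.1 p.2 hp]
      exact bot_le
  have hYinv : ∀ g : Equiv.Perm (Fin n), wreathPres n a g → ∀ v ∈ Y, ρ g v ∈ Y := by
    intro g hg v hv
    suffices h : Submodule.map (ρ g) Y ≤ Y from h ⟨v, hv, rfl⟩
    rw [hYdef, map_finsetSup]
    apply Finset.sup_le
    intro p _
    by_cases hp : sbFix n a p.1
    · rw [hYfam_pos p.1 p.2 hp, ← map_rho_mul]
      exact hC3 (g * p.1) (wreathPres_mul hg (sbFix_wreathPres ha hn hp)) p.2
    · rw [hYfam_neg p.1 p.2 hp]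
      simp
  have hYb : Y ≠ ⊥ := by
    intro hc
    apply hSSb true
    rw [eq_bot_iff, ← hc]
    have h1 := hterm_le 1 true sbFix_one
    rwa [map_rho_one] at h1
  have hXY : X = Y := by
    rcases hXsimp Y hYle hYinv with h | h
    · exact absurd h hYb
    · exact h.symm
  -- per-term facts
  have hcommsb : ∀ (d : Equiv.Perm (Fin n)), sbFix n a d →
      ∀ g : Equiv.Perm (Fin n), saFix n a g → ∀ v : V, ρ d (ρ g v) = ρ g (ρ d v) := by
    intro d hd g hg v
    rw [← Module.End.mul_apply, ← map_mul, ← Module.End.mul_apply, ← map_mul,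
      saFix_sbFix_comm hg hd]
  have htermInv : ∀ p : Equiv.Perm (Fin n) × Bool, Stab ρ (saFix n a) (Yfam p) := by
    intro p
    by_cases hp : sbFix n a p.1
    · rw [hYfam_pos p.1 p.2 hp]
      exact Stab_map ρ (fun g hg v => hcommsb p.1 hp g hg v) (hSSinv p.2)
    · rw [hYfam_neg p.1 p.2 hp]
      exact Stab_bot ρ
  have htermAtom : ∀ p : Equiv.Perm (Fin n) × Bool, ∀ Y' ≤ Yfam p,
      Stab ρ (saFix n a) Y' → Y' = ⊥ ∨ Y' = Yfam p := by
    intro p Y' hY'le hY'inv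
    by_cases hY'b : Y' = ⊥
    · exact Or.inl hY'b
    right
    by_cases hp : sbFix n a p.1
    swap
    · rw [hYfam_neg p.1 p.2 hp] at hY'le
      exact absurd (le_bot_iff.mp hY'le) hY'b
    rw [hYfam_pos p.1 p.2 hp] at hY'le ⊢
    have h1 : Submodule.map (ρ p.1⁻¹) Y' ≤ SS p.2 := by
      have h2 := Submodule.map_mono (f := ρ p.1⁻¹) hY'le
      rwa [map_rho_inv_map] at h2
    have h2 : Stab ρ (saFix n a) (Submodule.map (ρ p.1⁻¹) Y') :=
      Stab_map ρ (fun g hg v => hcommsb p.1⁻¹ (sbFix_inv hp) g hg v) hY'inv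
    have h3 := hSSmin p.2 _ h1 h2 (map_ne_bot ρ hY'b p.1⁻¹)
    have h4 := congrArg (Submodule.map (ρ p.1)) h3
    rwa [map_rho_map_inv] at h4
  have htermIso : ∀ p : Equiv.Perm (Fin n) × Bool, sbFix n a p.1 →
      IsoRel ρ (P := saFix n a) (Submodule.map (ρ p.1) (SS p.2)) ⊥ (SS p.2) ⊥ := by
    intro p hp
    apply buildIso ρ (saFix n a) (ρ p.1⁻¹) _ _ _ _ bot_le bot_le
    · rintro _ ⟨s, hs, rfl⟩
      rwa [rho_inv_apply]
    · intro x hx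
      simp only [Submodule.mem_bot]
      constructor
      · intro h
        have := congrArg (ρ p.1) h
        rwa [rho_apply_inv, map_zero] at this
      · intro h
        rw [h, map_zero]
    · intro y hy
      refine ⟨ρ p.1 y, Submodule.mem_map_of_mem hy, ?_⟩
      rw [rho_inv_apply]
      simp
    · exact Stab_bot ρ
    · intro g hg v
      rw [← Module.End.mul_apply, ← map_mul, ← Module.End.mul_apply, ← map_mul,
        saFix_sbFix_comm hg (sbFix_inv hp)]
  exact ⟨SS, hSSinv, hSSb, hSSmin, hXY, htermInv, htermAtom, htermIso⟩

end Stmt18C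
-- PART ONE
namespace Stmt18P1
open Stmt18 Stmt18B Stmt18M Submodule

lemma main_one (F : Type) [Field F] [IsAlgClosed F] [CharP F 2]
    (a n : ℕ) (ha : 2 ≤ a) (hn : n = 2 * a)
    (V : Type) [AddCommGroup V] [Module F V]
    (ρ : Representation F (Equiv.Perm (Fin n)) V)
    (hirr : ∀ W : Submodule F V, (∀ g : Equiv.Perm (Fin n), ∀ v ∈ W, ρ g v ∈ W) →
      W = ⊥ ∨ W = ⊤)
    (Ep Em : Submodule F V)
    (hEpinv : ∀ g ∈ alternatingGroup (Fin n), ∀ v ∈ Ep, ρ g v ∈ Ep)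
    (hEminv : ∀ g ∈ alternatingGroup (Fin n), ∀ v ∈ Em, ρ g v ∈ Em)
    (hEpbot : Ep ≠ ⊥) (hEmbot : Em ≠ ⊥) (hdisj : Ep ⊓ Em = ⊥) (hsup : Ep ⊔ Em = ⊤)
    (hEpirr : ∀ W : Submodule F V, W ≤ Ep →
      (∀ g ∈ alternatingGroup (Fin n), ∀ v ∈ W, ρ g v ∈ W) → W = ⊥ ∨ W = Ep)
    (hEmirr : ∀ W : Submodule F V, W ≤ Em →
      (∀ g ∈ alternatingGroup (Fin n), ∀ v ∈ W, ρ g v ∈ W) → W = ⊥ ∨ W = Em)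
    (hrestr : ∀ W : Submodule F V, W ≤ Ep →
      (∀ g ∈ alternatingGroup (Fin n), wreathPres n a g → ∀ v ∈ W, ρ g v ∈ W) →
      W = ⊥ ∨ W = Ep) :
    ((∀ W : Submodule F V, (∀ g : Equiv.Perm (Fin n), wreathPres n a g → ∀ v ∈ W, ρ g v ∈ W) →
        W = ⊥ ∨ W = ⊤)
      ∨ (∃ U : Submodule F V,
          (∀ g : Equiv.Perm (Fin n), wreathPres n a g → ∀ v ∈ U, ρ g v ∈ U) ∧
          U ≠ ⊥ ∧ U ≠ ⊤ ∧
          (∀ W : Submodule F V, W ≤ U →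
            (∀ g : Equiv.Perm (Fin n), wreathPres n a g → ∀ v ∈ W, ρ g v ∈ W) →
            W = ⊥ ∨ W = U) ∧
          (∀ W : Submodule F V, U ≤ W →
            (∀ g : Equiv.Perm (Fin n), wreathPres n a g → ∀ v ∈ W, ρ g v ∈ W) →
            W = U ∨ W = ⊤) ∧
          ∃ e : (V ⧸ U) ≃ₗ[F] ↥U, ∀ g : Equiv.Perm (Fin n), wreathPres n a g →
            ∀ v : V, ((e (Submodule.Quotient.mk (ρ g v)) : ↥U) : V)
              = ρ g ((e (Submodule.Quotient.mk v) : ↥U) : V))) := by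
  classical
  -- basic group facts
  have hAmem : ∀ g : Equiv.Perm (Fin n), Equiv.Perm.sign g = 1 → g ∈ alternatingGroup (Fin n) :=
    fun g h => Equiv.Perm.mem_alternatingGroup.mpr h
  set τ : Equiv.Perm (Fin n) := tau ha hn with hτdef
  have hττ : τ * τ = 1 := tau_mul_self ha hn
  have hτsign : Equiv.Perm.sign τ = -1 := tau_sign ha hn
  have hτw : wreathPres n a τ := tau_wreathPres ha hn
  have hρ2 : ∀ (σ σ' : Equiv.Perm (Fin n)) (x : V), ρ σ (ρ σ' x) = ρ (σ * σ') x := by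
    intro σ σ' x
    rw [map_mul]
    rfl
  have hρττ : ∀ x : V, ρ τ (ρ τ x) = x := by
    intro x
    rw [hρ2, hττ, map_one]
    rfl
  have hsigncases : ∀ g : Equiv.Perm (Fin n),
      Equiv.Perm.sign g = 1 ∨ Equiv.Perm.sign (g * τ) = 1 := by
    intro g
    rcases Int.units_eq_one_or (Equiv.Perm.sign g) with h | h
    · exact Or.inl h
    · right
      rw [map_mul, h, hτsign]
      norm_num
  have hgττ : ∀ g : Equiv.Perm (Fin n), (g * τ) * τ = g := by
    intro g
    rw [mul_assoc, hττ, mul_one]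
  -- finite dimensionality
  have hVfin : FiniteDimensional F V := by
    obtain ⟨v0, hv0mem, hv0⟩ := (Submodule.ne_bot_iff Ep).mp hEpbot
    set W0 : Submodule F V := Submodule.span F (Set.range fun g : Equiv.Perm (Fin n) => ρ g v0)
      with hW0
    have hW0inv : ∀ g : Equiv.Perm (Fin n), ∀ v ∈ W0, ρ g v ∈ W0 := by
      intro g v hv
      have : Submodule.map (ρ g) W0 ≤ W0 := by
        rw [hW0, Submodule.map_span, Submodule.span_le]
        rintro _ ⟨_, ⟨h, rfl⟩, rfl⟩
        exact Submodule.subset_span ⟨g * h, (hρ2 g h v0).symm⟩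
      exact this ⟨v, hv, rfl⟩
    have hW0top : W0 = ⊤ := by
      rcases hirr W0 hW0inv with h | h
      · exfalso
        apply hv0
        have : v0 ∈ W0 := Submodule.subset_span ⟨1, show ρ 1 v0 = v0 by rw [map_one]; rfl⟩
        rw [h] at this
        simpa using this
      · exact h
    have : (⊤ : Submodule F V).FG := by
      refine ⟨(Set.finite_range fun g : Equiv.Perm (Fin n) => ρ g v0).toFinset, ?_⟩
      rw [Set.Finite.coe_toFinset, ← hW0, hW0top]
    rw [← Module.finite_def] at this
    exact this
  -- projections
  have hcompl : IsCompl Ep Em := ⟨disjoint_iff.mpr hdisj, codisjoint_iff.mpr hsup⟩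
  set πp : V →ₗ[F] ↥Ep := Ep.linearProjOfIsCompl Em hcompl with hπp
  set π' : V →ₗ[F] V := Ep.subtype.comp πp with hπ'
  have hπ'Ep : ∀ x ∈ Ep, π' x = x := by
    intro x hx
    show (Ep.subtype) (πp x) = x
    have := Submodule.linearProjOfIsCompl_apply_left hcompl ⟨x, hx⟩
    rw [hπp]
    rw [show πp (x : V) = πp ((⟨x, hx⟩ : ↥Ep) : V) from rfl]
    erw [this]
    rfl
  have hπ'Em : ∀ x ∈ Em, π' x = 0 := by
    intro x hx
    show (Ep.subtype) (πp x) = 0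
    have := Submodule.linearProjOfIsCompl_apply_right hcompl ⟨x, hx⟩
    rw [show πp (x : V) = πp ((⟨x, hx⟩ : ↥Em) : V) from rfl]
    erw [this]
    rfl
  have hπ'mem : ∀ x : V, π' x ∈ Ep := fun x => (πp x).2
  have hdecomp : ∀ x : V, x - π' x ∈ Em := by
    intro x
    have hx : x ∈ Ep ⊔ Em := by rw [hsup]; trivial
    rw [Submodule.mem_sup] at hx
    obtain ⟨p, hp, m, hm, rfl⟩ := hx
    have h1 : π' (p + m) = p := by
      rw [map_add, hπ'Ep p hp, hπ'Em m hm, add_zero]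
    rw [h1]
    simpa using hm
  have hπ'zero : ∀ x : V, π' x = 0 → x ∈ Em := by
    intro x hx
    have := hdecomp x
    rwa [hx, sub_zero] at this
  have hπ'comm : ∀ g : Equiv.Perm (Fin n), Equiv.Perm.sign g = 1 →
      ∀ x : V, π' (ρ g x) = ρ g (π' x) := by
    intro g hg x
    have hx : ρ g x = ρ g (π' x) + ρ g (x - π' x) := by rw [← map_add]; congr 1; abel
    rw [hx, map_add, hπ'Ep _ (hEpinv g (hAmem g hg) _ (hπ'mem x)),
      hπ'Em _ (hEminv g (hAmem g hg) _ (hdecomp x)), add_zero]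
  -- τ-translates
  have hmapmap : ∀ W : Submodule F V,
      Submodule.map (ρ τ) (Submodule.map (ρ τ) W) = W := by
    intro W
    rw [← Submodule.map_comp]
    have hcompid : (ρ τ).comp (ρ τ) = LinearMap.id := by
      ext x
      simp only [LinearMap.comp_apply, LinearMap.id_apply]
      exact hρττ x
    rw [hcompid, Submodule.map_id]
  have hAinvmap : ∀ W : Submodule F V, (∀ g ∈ alternatingGroup (Fin n), ∀ v ∈ W, ρ g v ∈ W) →
      ∀ g ∈ alternatingGroup (Fin n), ∀ v ∈ Submodule.map (ρ τ) W,
        ρ g v ∈ Submodule.map (ρ τ) W := by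
    intro W hW g hg v hv
    obtain ⟨w, hw, rfl⟩ := hv
    refine ⟨ρ (τ * g * τ) w, hW _ ?_ w hw, ?_⟩
    · apply hAmem
      have hsg : Equiv.Perm.sign g = 1 := Equiv.Perm.mem_alternatingGroup.mp hg
      rw [map_mul, map_mul, hsg, hτsign]
      norm_num
    · rw [hρ2, hρ2]
      have : τ * (τ * g * τ) = g * τ := by
        rw [← mul_assoc, ← mul_assoc, hττ, one_mul]
      rw [this]
  have hmEpinv := hAinvmap Ep hEpinv
  have hmEminv := hAinvmap Em hEminv
  have hEptop : Ep ≠ ⊤ := by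
    intro hc
    rw [hc, top_inf_eq] at hdisj
    exact hEmbot hdisj
  have hEmtop : Em ≠ ⊤ := by
    intro hc
    rw [hc, inf_top_eq] at hdisj
    exact hEpbot hdisj
  have hSn : ∀ W : Submodule F V, (∀ g ∈ alternatingGroup (Fin n), ∀ v ∈ W, ρ g v ∈ W) →
      (∀ v ∈ W, ρ τ v ∈ W) → ∀ g : Equiv.Perm (Fin n), ∀ v ∈ W, ρ g v ∈ W := by
    intro W hA hτc g v hv
    rcases hsigncases g with h | h
    · exact hA g (hAmem g h) v hv
    · have heq : ρ g v = ρ (g * τ) (ρ τ v) := by rw [hρ2, hgττ]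
      rw [heq]
      exact hA _ (hAmem _ h) _ (hτc v hv)
  have hmEpne : Submodule.map (ρ τ) Ep ≠ Ep := by
    intro hc
    have hEpall : ∀ g : Equiv.Perm (Fin n), ∀ v ∈ Ep, ρ g v ∈ Ep := by
      apply hSn Ep hEpinv
      intro v hv
      rw [← hc]
      exact ⟨v, hv, rfl⟩
    rcases hirr Ep hEpall with h | h
    exacts [hEpbot h, hEptop h]
  have hmEmne : Submodule.map (ρ τ) Em ≠ Em := by
    intro hc
    have hEmall : ∀ g : Equiv.Perm (Fin n), ∀ v ∈ Em, ρ g v ∈ Em := by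
      apply hSn Em hEminv
      intro v hv
      rw [← hc]
      exact ⟨v, hv, rfl⟩
    rcases hirr Em hEmall with h | h
    exacts [hEmbot h, hEmtop h]
  have hmEpEp : Submodule.map (ρ τ) Ep ⊓ Ep = ⊥ := by
    rcases hEpirr (Submodule.map (ρ τ) Ep ⊓ Ep) inf_le_right
      (fun g hg v hv => ⟨hmEpinv g hg v hv.1, hEpinv g hg v hv.2⟩) with h | h
    · exact h
    · exfalso
      apply hmEpne
      have h1 : Ep ≤ Submodule.map (ρ τ) Ep := h.symm.le.trans inf_le_left
      have h2 : Submodule.map (ρ τ) Ep ≤ Ep := by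
        have h3 := Submodule.map_mono (f := ρ τ) h1
        rwa [hmapmap Ep] at h3
      exact le_antisymm h2 h1
  have hmEmEm : Submodule.map (ρ τ) Em ⊓ Em = ⊥ := by
    rcases hEmirr (Submodule.map (ρ τ) Em ⊓ Em) inf_le_right
      (fun g hg v hv => ⟨hmEminv g hg v hv.1, hEminv g hg v hv.2⟩) with h | h
    · exact h
    · exfalso
      apply hmEmne
      have h1 : Em ≤ Submodule.map (ρ τ) Em := h.symm.le.trans inf_le_left
      have h2 : Submodule.map (ρ τ) Em ≤ Em := by
        have h3 := Submodule.map_mono (f := ρ τ) h1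
        rwa [hmapmap Em] at h3
      exact le_antisymm h2 h1
  have hτsupinv : ∀ W : Submodule F V, (∀ v ∈ W, ρ τ v ∈ Submodule.map (ρ τ) W) := by
    intro W v hv
    exact ⟨v, hv, rfl⟩
  have hmEpsup : Submodule.map (ρ τ) Ep ⊔ Ep = ⊤ := by
    have hinvA : ∀ g ∈ alternatingGroup (Fin n), ∀ v ∈ Submodule.map (ρ τ) Ep ⊔ Ep,
        ρ g v ∈ Submodule.map (ρ τ) Ep ⊔ Ep :=
      Stmt18M.Stab_sup ρ (P := fun g => g ∈ alternatingGroup (Fin n)) hmEpinv hEpinv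
    have hinvτ : ∀ v ∈ Submodule.map (ρ τ) Ep ⊔ Ep, ρ τ v ∈ Submodule.map (ρ τ) Ep ⊔ Ep := by
      intro v hv
      rw [Submodule.mem_sup] at hv
      obtain ⟨y, hy, z, hz, rfl⟩ := hv
      obtain ⟨p, hp, rfl⟩ := hy
      rw [map_add, hρττ p]
      exact add_mem (le_sup_right (α := Submodule F V) hp)
        (le_sup_left (α := Submodule F V) ⟨z, hz, rfl⟩)
    rcases hirr _ (hSn _ hinvA hinvτ) with h | h
    · exfalso
      apply hEpbot
      rw [← le_bot_iff, ← h]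
      exact le_sup_right
    · exact h
  have hmEmsup : Submodule.map (ρ τ) Em ⊔ Em = ⊤ := by
    have hinvA : ∀ g ∈ alternatingGroup (Fin n), ∀ v ∈ Submodule.map (ρ τ) Em ⊔ Em,
        ρ g v ∈ Submodule.map (ρ τ) Em ⊔ Em :=
      Stmt18M.Stab_sup ρ (P := fun g => g ∈ alternatingGroup (Fin n)) hmEminv hEminv
    have hinvτ : ∀ v ∈ Submodule.map (ρ τ) Em ⊔ Em, ρ τ v ∈ Submodule.map (ρ τ) Em ⊔ Em := by
      intro v hv
      rw [Submodule.mem_sup] at hv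
      obtain ⟨y, hy, z, hz, rfl⟩ := hv
      obtain ⟨p, hp, rfl⟩ := hy
      rw [map_add, hρττ p]
      exact add_mem (le_sup_right (α := Submodule F V) hp)
        (le_sup_left (α := Submodule F V) ⟨z, hz, rfl⟩)
    rcases hirr _ (hSn _ hinvA hinvτ) with h | h
    · exfalso
      apply hEmbot
      rw [← le_bot_iff, ← h]
      exact le_sup_right
    · exact h
  -- Em restricted to the even wreath elements is irreducible
  have hφinj : ∀ v ∈ Em, π' (ρ τ v) = 0 → v = 0 := by
    intro v hv h0
    have h1 : ρ τ v ∈ Em := hπ'zero _ h0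
    have h2 : ρ τ v ∈ Submodule.map (ρ τ) Em := ⟨v, hv, rfl⟩
    have h3 : ρ τ v = 0 := by
      have : ρ τ v ∈ Submodule.map (ρ τ) Em ⊓ Em := ⟨h2, h1⟩
      rwa [hmEmEm, Submodule.mem_bot] at this
    have := congrArg (ρ τ) h3
    rwa [hρττ, map_zero] at this
  have hEmrestr : ∀ W' : Submodule F V, W' ≤ Em →
      (∀ g : Equiv.Perm (Fin n), Equiv.Perm.sign g = 1 → wreathPres n a g →
        ∀ v ∈ W', ρ g v ∈ W') → W' = ⊥ ∨ W' = Em := by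
    intro W' hW'Em hW'inv
    set φ : V →ₗ[F] V := π'.comp (ρ τ) with hφ
    have hφapp : ∀ v : V, φ v = π' (ρ τ v) := fun v => rfl
    have hW''le : Submodule.map φ W' ≤ Ep := by
      rintro _ ⟨w, hw, rfl⟩
      exact hπ'mem _
    have hW''inv : ∀ g ∈ alternatingGroup (Fin n), wreathPres n a g →
        ∀ v ∈ Submodule.map φ W', ρ g v ∈ Submodule.map φ W' := by
      intro g hg hgw v hv
      obtain ⟨w, hw, rfl⟩ := hv
      have hsg : Equiv.Perm.sign g = 1 := Equiv.Perm.mem_alternatingGroup.mp hg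
      have hh : τ * g * τ = τ * (g * τ) := by rw [mul_assoc]
      have hsgh : Equiv.Perm.sign (τ * g * τ) = 1 := by
        rw [map_mul, map_mul, hsg, hτsign]; norm_num
      have hwh : wreathPres n a (τ * g * τ) :=
        wreathPres_mul (wreathPres_mul hτw hgw) hτw
      refine ⟨ρ (τ * g * τ) w, hW'inv _ hsgh hwh w hw, ?_⟩
      rw [hφapp, hφapp, hρ2, ← hπ'comm g hsg (ρ τ w), hρ2]
      have heq : τ * (τ * g * τ) = g * τ := by
        rw [← mul_assoc, ← mul_assoc, hττ, one_mul]
      rw [heq]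
    rcases hrestr (Submodule.map φ W') hW''le hW''inv with h | h
    · left
      rw [eq_bot_iff]
      intro w hw
      have h0 : φ w = 0 := by
        have h1 : φ w ∈ (⊥ : Submodule F V) := h ▸ Submodule.mem_map_of_mem hw
        simpa using h1
      have h2 : w = 0 := hφinj w (hW'Em hw) (by rw [← hφapp]; exact h0)
      simp [h2]
    · right
      apply le_antisymm hW'Em
      intro m hm
      have hφm : φ m ∈ Submodule.map φ W' := by rw [h]; exact hπ'mem _
      obtain ⟨w, hw, hww⟩ := hφm
      have h1 : φ (w - m) = 0 := by rw [map_sub, hww, sub_self]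
      have hwm : w - m = 0 := hφinj _ (sub_mem (hW'Em hw) hm) (by rw [← hφapp]; exact h1)
      have h2 : w = m := by rwa [sub_eq_zero] at hwm
      rwa [← h2]
  -- main case split
  by_cases hsimple : ∀ W : Submodule F V,
      (∀ g : Equiv.Perm (Fin n), wreathPres n a g → ∀ v ∈ W, ρ g v ∈ W) → W = ⊥ ∨ W = ⊤
  · exact Or.inl hsimple
  right
  push_neg at hsimple
  obtain ⟨W, hWinv, hWb, hWt⟩ := hsimple
  have hWτ : ∀ v ∈ W, ρ τ v ∈ W := fun v hv => hWinv τ hτw v hv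
  -- W ⊓ Ep = ⊥ and W ⊓ Em = ⊥
  have hWEp : W ⊓ Ep = ⊥ := by
    rcases hrestr (W ⊓ Ep) inf_le_right
      (fun g hg hgw v hv => ⟨hWinv g hgw v hv.1, hEpinv g hg v hv.2⟩) with h | h
    · exact h
    · exfalso
      apply hWt
      have hEpW : Ep ≤ W := h.symm.le.trans inf_le_left
      have hmEpW : Submodule.map (ρ τ) Ep ≤ W := by
        rintro _ ⟨p, hp, rfl⟩
        exact hWτ p (hEpW hp)
      rw [← top_le_iff, ← hmEpsup]
      exact sup_le hmEpW hEpW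
  have hWEm : W ⊓ Em = ⊥ := by
    rcases hEmrestr (W ⊓ Em) inf_le_right
      (fun g hsg hgw v hv => ⟨hWinv g hgw v hv.1, hEminv g (hAmem g hsg) v hv.2⟩) with h | h
    · exact h
    · exfalso
      apply hWt
      have hEmW : Em ≤ W := h.symm.le.trans inf_le_left
      have hmEmW : Submodule.map (ρ τ) Em ≤ W := by
        rintro _ ⟨p, hp, rfl⟩
        exact hWτ p (hEmW hp)
      rw [← top_le_iff, ← hmEmsup]
      exact sup_le hmEmW hEmW
  -- second projection
  set π'' : V →ₗ[F] V := LinearMap.id - π' with hπ''def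
  have hπ''app : ∀ x : V, π'' x = x - π' x := fun x => rfl
  have hπ''mem : ∀ x : V, π'' x ∈ Em := fun x => by rw [hπ''app]; exact hdecomp x
  have hπ''zero : ∀ x : V, π'' x = 0 → x ∈ Ep := by
    intro x hx
    rw [hπ''app, sub_eq_zero] at hx
    rw [hx]
    exact hπ'mem x
  have hπ''comm : ∀ g : Equiv.Perm (Fin n), Equiv.Perm.sign g = 1 →
      ∀ x : V, π'' (ρ g x) = ρ g (π'' x) := by
    intro g hg x
    rw [hπ''app, hπ''app, hπ'comm g hg, map_sub]
  have hπ'Epmem : ∀ x : V, x - π'' x ∈ Ep := by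
    intro x
    rw [hπ''app, sub_sub_cancel]
    exact hπ'mem x
  -- projections of W
  have hπ'W : Submodule.map π' W = Ep := by
    have hinvW : ∀ g ∈ alternatingGroup (Fin n), wreathPres n a g →
        ∀ v ∈ Submodule.map π' W, ρ g v ∈ Submodule.map π' W := by
      rintro g hg hgw _ ⟨w, hw, rfl⟩
      have hsg : Equiv.Perm.sign g = 1 := Equiv.Perm.mem_alternatingGroup.mp hg
      exact ⟨ρ g w, hWinv g hgw w hw, hπ'comm g hsg w⟩
    rcases hrestr (Submodule.map π' W) (by rintro _ ⟨w, _, rfl⟩; exact hπ'mem w) hinvW with h | h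
    · exfalso
      apply hWb
      rw [eq_bot_iff]
      intro w hw
      have h1 : π' w = 0 := by
        have h2 : π' w ∈ (⊥ : Submodule F V) := h ▸ Submodule.mem_map_of_mem hw
        simpa using h2
      have h3 : w ∈ W ⊓ Em := ⟨hw, hπ'zero w h1⟩
      rwa [hWEm] at h3
    · exact h
  have hπ''W : Submodule.map π'' W = Em := by
    have hinvW : ∀ g : Equiv.Perm (Fin n), Equiv.Perm.sign g = 1 → wreathPres n a g →
        ∀ v ∈ Submodule.map π'' W, ρ g v ∈ Submodule.map π'' W := by
      rintro g hsg hgw _ ⟨w, hw, rfl⟩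
      exact ⟨ρ g w, hWinv g hgw w hw, hπ''comm g hsg w⟩
    rcases hEmrestr (Submodule.map π'' W) (by rintro _ ⟨w, _, rfl⟩; exact hπ''mem w) hinvW with h | h
    · exfalso
      apply hWb
      rw [eq_bot_iff]
      intro w hw
      have h1 : π'' w = 0 := by
        have h2 : π'' w ∈ (⊥ : Submodule F V) := h ▸ Submodule.mem_map_of_mem hw
        simpa using h2
      have h3 : w ∈ W ⊓ Ep := ⟨hw, hπ''zero w h1⟩
      rwa [hWEp] at h3
    · exact h
  -- sups with W
  have hWEpsup : W ⊔ Ep = ⊤ := by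
    rw [eq_top_iff]
    intro v _
    have h1 : π'' v ∈ Submodule.map π'' W := by rw [hπ''W]; exact hπ''mem v
    obtain ⟨w, hw, hww⟩ := h1
    rw [Submodule.mem_sup]
    refine ⟨w, hw, v - w, ?_, by abel⟩
    have h2 : v - w = (v - π'' v) - (w - π'' w) := by rw [hww]; abel
    rw [h2]
    exact sub_mem (hπ'Epmem v) (hπ'Epmem w)
  have hWEmsup : W ⊔ Em = ⊤ := by
    rw [eq_top_iff]
    intro v _
    have h1 : π' v ∈ Submodule.map π' W := by rw [hπ'W]; exact hπ'mem v
    obtain ⟨w, hw, hww⟩ := h1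
    rw [Submodule.mem_sup]
    refine ⟨w, hw, v - w, ?_, by abel⟩
    have h2 : v - w = (v - π' v) - (w - π' w) := by rw [hww]; abel
    rw [h2]
    exact sub_mem (hdecomp v) (hdecomp w)
  -- minimality (under even wreath elements)
  have hminG : ∀ U : Submodule F V, U ≤ W →
      (∀ g : Equiv.Perm (Fin n), Equiv.Perm.sign g = 1 → wreathPres n a g →
        ∀ v ∈ U, ρ g v ∈ U) → U = ⊥ ∨ U = W := by
    intro U hUW hUinv
    have hinvU : ∀ g ∈ alternatingGroup (Fin n), wreathPres n a g →
        ∀ v ∈ Submodule.map π' U, ρ g v ∈ Submodule.map π' U := by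
      rintro g hg hgw _ ⟨u, hu, rfl⟩
      have hsg : Equiv.Perm.sign g = 1 := Equiv.Perm.mem_alternatingGroup.mp hg
      exact ⟨ρ g u, hUinv g hsg hgw u hu, hπ'comm g hsg u⟩
    rcases hrestr (Submodule.map π' U) (by rintro _ ⟨u, _, rfl⟩; exact hπ'mem u) hinvU with h | h
    · left
      rw [eq_bot_iff]
      intro u hu
      have h1 : π' u = 0 := by
        have h2 : π' u ∈ (⊥ : Submodule F V) := h ▸ Submodule.mem_map_of_mem hu
        simpa using h2
      have h3 : u ∈ W ⊓ Em := ⟨hUW hu, hπ'zero u h1⟩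
      rwa [hWEm] at h3
    · right
      apply le_antisymm hUW
      intro w hw
      have h1 : π' w ∈ Submodule.map π' U := by rw [h]; exact hπ'mem w
      obtain ⟨u, hu, huw⟩ := h1
      have h2 : π' (w - u) = 0 := by rw [map_sub, ← huw, sub_self]
      have h3 : w - u ∈ W ⊓ Em := ⟨sub_mem hw (hUW hu), hπ'zero _ h2⟩
      rw [hWEm, Submodule.mem_bot] at h3
      have h4 : w = u := by rwa [sub_eq_zero] at h3
      rwa [h4]
  -- maximality
  have hmax : ∀ X : Submodule F V, W ≤ X →
      (∀ g : Equiv.Perm (Fin n), wreathPres n a g → ∀ v ∈ X, ρ g v ∈ X) →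
      X = W ∨ X = ⊤ := by
    intro X hWX hXinv
    rcases hrestr (X ⊓ Ep) inf_le_right
      (fun g hg hgw v hv => ⟨hXinv g hgw v hv.1, hEpinv g hg v hv.2⟩) with h1 | h1
    · rcases hEmrestr (X ⊓ Em) inf_le_right
        (fun g hsg hgw v hv => ⟨hXinv g hgw v hv.1, hEminv g (hAmem g hsg) v hv.2⟩) with h2 | h2
      · left
        apply le_antisymm _ hWX
        intro x hx
        have h3 : π' x ∈ Submodule.map π' W := by rw [hπ'W]; exact hπ'mem x
        obtain ⟨w, hw, hww⟩ := h3
        have h4 : π' (x - w) = 0 := by rw [map_sub, ← hww, sub_self]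
        have h6 : x - w ∈ X ⊓ Em := ⟨sub_mem hx (hWX hw), hπ'zero _ h4⟩
        rw [h2, Submodule.mem_bot] at h6
        have h7 : x = w := by rwa [sub_eq_zero] at h6
        rw [h7]; exact hw
      · right
        rw [eq_top_iff, ← hWEmsup]
        exact sup_le hWX (h2.symm.le.trans inf_le_left)
    · right
      rw [eq_top_iff, ← hWEpsup]
      exact sup_le hWX (h1.symm.le.trans inf_le_left)
  -- the isomorphism V/W ≃ W
  set q0 : ↥Ep →ₗ[F] V ⧸ W := W.mkQ.comp Ep.subtype with hq0
  have hq0app : ∀ p : ↥Ep, q0 p = Submodule.Quotient.mk (p : V) := fun p => rfl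
  have hq0inj : Function.Injective q0 := by
    rw [← LinearMap.ker_eq_bot, eq_bot_iff]
    rintro ⟨p, hp⟩ hker
    rw [LinearMap.mem_ker, hq0app, Submodule.Quotient.mk_eq_zero] at hker
    have h2 : p ∈ W ⊓ Ep := ⟨hker, hp⟩
    rw [hWEp, Submodule.mem_bot] at h2
    simp [h2]
  have hq0surj : Function.Surjective q0 := by
    intro z
    obtain ⟨v, rfl⟩ := Submodule.Quotient.mk_surjective W z
    have hv : v ∈ W ⊔ Ep := by rw [hWEpsup]; trivial
    rw [Submodule.mem_sup] at hv
    obtain ⟨w, hw, p, hp, rfl⟩ := hv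
    refine ⟨⟨p, hp⟩, ?_⟩
    rw [hq0app, Submodule.Quotient.eq]
    have : (p : V) - (w + p) = -w := by abel
    rw [this]
    exact neg_mem hw
  set qe : ↥Ep ≃ₗ[F] (V ⧸ W) := LinearEquiv.ofBijective q0 ⟨hq0inj, hq0surj⟩ with hqe
  set r0 : ↥W →ₗ[F] ↥Ep := πp.comp W.subtype with hr0
  have hr0app : ∀ w : ↥W, ((r0 w : ↥Ep) : V) = π' (w : V) := fun w => rfl
  have hr0inj : Function.Injective r0 := by
    rw [← LinearMap.ker_eq_bot, eq_bot_iff]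
    rintro ⟨w, hw⟩ hker
    rw [LinearMap.mem_ker] at hker
    have h1 : π' w = 0 := by
      rw [← hr0app ⟨w, hw⟩, hker]
      rfl
    have h3 : w ∈ W ⊓ Em := ⟨hw, hπ'zero w h1⟩
    rw [hWEm, Submodule.mem_bot] at h3
    simp [h3]
  have hr0surj : Function.Surjective r0 := by
    rintro ⟨p, hp⟩
    have h1 : p ∈ Submodule.map π' W := by rw [hπ'W]; exact hp
    obtain ⟨w, hw, hww⟩ := h1
    refine ⟨⟨w, hw⟩, ?_⟩
    apply Subtype.ext
    rw [hr0app]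
    exact hww
  set re : ↥W ≃ₗ[F] ↥Ep := LinearEquiv.ofBijective r0 ⟨hr0inj, hr0surj⟩ with hre
  set e : (V ⧸ W) ≃ₗ[F] ↥W := qe.symm.trans re.symm with he
  -- characterisation of e
  have hchar1 : ∀ x : V, x - π' ((e (Submodule.Quotient.mk x) : ↥W) : V) ∈ W := by
    intro x
    have h1 : q0 (qe.symm (Submodule.Quotient.mk x)) = Submodule.Quotient.mk x := by
      have h2 := qe.apply_symm_apply (Submodule.Quotient.mk x)
      exact h2
    rw [hq0app, Submodule.Quotient.eq] at h1
    have h3 : e (Submodule.Quotient.mk x) = re.symm (qe.symm (Submodule.Quotient.mk x)) := by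
      rw [he, LinearEquiv.trans_apply]
    have h4 : π' ((e (Submodule.Quotient.mk x) : ↥W) : V)
        = ((qe.symm (Submodule.Quotient.mk x) : ↥Ep) : V) := by
      rw [h3, ← hr0app]
      congr 1
      have h5 := re.apply_symm_apply (qe.symm (Submodule.Quotient.mk x))
      exact h5
    rw [h4]
    have h6 := neg_mem h1
    have h7 : -(((qe.symm (Submodule.Quotient.mk x) : ↥Ep) : V) - x)
        = x - ((qe.symm (Submodule.Quotient.mk x) : ↥Ep) : V) := by abel
    rwa [h7] at h6
  have hchar2 : ∀ (x w : V), w ∈ W → x - π' w ∈ W →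
      ((e (Submodule.Quotient.mk x) : ↥W) : V) = w := by
    intro x w hw hxw
    have hw0W : ((e (Submodule.Quotient.mk x) : ↥W) : V) ∈ W := (e (Submodule.Quotient.mk x)).2
    have h1 := hchar1 x
    have h2 : π' ((e (Submodule.Quotient.mk x) : ↥W) : V) - π' w ∈ W := by
      have h := sub_mem hxw h1
      have heq : (x - π' w) - (x - π' ((e (Submodule.Quotient.mk x) : ↥W) : V))
          = π' ((e (Submodule.Quotient.mk x) : ↥W) : V) - π' w := by abel
      rwa [heq] at h
    have h3 : π' ((e (Submodule.Quotient.mk x) : ↥W) : V) - π' w ∈ Ep :=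
      sub_mem (hπ'mem _) (hπ'mem w)
    have h4 : π' ((e (Submodule.Quotient.mk x) : ↥W) : V) - π' w = 0 := by
      have h5 : _ ∈ W ⊓ Ep := ⟨h2, h3⟩
      rwa [hWEp, Submodule.mem_bot] at h5
    have h5 : π' (((e (Submodule.Quotient.mk x) : ↥W) : V) - w) = 0 := by
      rw [map_sub]; exact h4
    have h6 : ((e (Submodule.Quotient.mk x) : ↥W) : V) - w ∈ W ⊓ Em :=
      ⟨sub_mem hw0W hw, hπ'zero _ h5⟩
    rw [hWEm, Submodule.mem_bot] at h6
    rwa [sub_eq_zero] at h6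
  have hΦeven : ∀ g : Equiv.Perm (Fin n), Equiv.Perm.sign g = 1 → wreathPres n a g →
      ∀ x : V, ((e (Submodule.Quotient.mk (ρ g x)) : ↥W) : V)
        = ρ g ((e (Submodule.Quotient.mk x) : ↥W) : V) := by
    intro g hsg hgw x
    apply hchar2
    · exact hWinv g hgw _ (e (Submodule.Quotient.mk x)).2
    · rw [hπ'comm g hsg, ← map_sub]
      exact hWinv g hgw _ (hchar1 x)
  -- the endomorphism ψ of W
  set ψ : ↥W →ₗ[F] ↥W :=
    ((ρ τ).restrict (p := W) (q := W) hWτ).comp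
      (e.toLinearMap.comp (W.mkQ.comp ((ρ τ).comp (π'.comp W.subtype)))) with hψ
  have hψapp : ∀ w : ↥W, ((ψ w : ↥W) : V)
      = ρ τ ((e (Submodule.Quotient.mk (ρ τ (π' (w : V)))) : ↥W) : V) := by
    intro w
    rw [hψ]
    simp only [LinearMap.comp_apply, LinearMap.restrict_coe_apply, Submodule.mkQ_apply,
      LinearEquiv.coe_coe, Submodule.coe_subtype]
  have hψE : ∀ x : V, ((ψ (e (Submodule.Quotient.mk x)) : ↥W) : V)
      = ρ τ ((e (Submodule.Quotient.mk (ρ τ x)) : ↥W) : V) := by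
    intro x
    rw [hψapp]
    have h3 : Submodule.Quotient.mk (p := W) (ρ τ (π' ((e (Submodule.Quotient.mk x) : ↥W) : V)))
        = Submodule.Quotient.mk (ρ τ x) := by
      rw [Submodule.Quotient.eq]
      have h4 := hchar1 x
      rw [← map_sub]
      apply hWτ
      have h5 : π' ((e (Submodule.Quotient.mk x) : ↥W) : V) - x
          = -(x - π' ((e (Submodule.Quotient.mk x) : ↥W) : V)) := by abel
      rw [h5]
      exact neg_mem h4
    rw [h3]
  have hψcomm : ∀ g : Equiv.Perm (Fin n), Equiv.Perm.sign g = 1 → wreathPres n a g →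
      ∀ (w : ↥W) (hmem : ρ g (w : V) ∈ W),
        ((ψ ⟨ρ g (w : V), hmem⟩ : ↥W) : V) = ρ g ((ψ w : ↥W) : V) := by
    intro g hsg hgw w hmem
    rw [hψapp, hψapp]
    have h1 : π' (ρ g (w : V)) = ρ g (π' (w : V)) := hπ'comm g hsg _
    rw [h1]
    have hh : Equiv.Perm.sign (τ * g * τ) = 1 := by
      rw [map_mul, map_mul, hsg, hτsign]; norm_num
    have hhw : wreathPres n a (τ * g * τ) :=
      wreathPres_mul (wreathPres_mul hτw hgw) hτw
    have h2 : ρ τ (ρ g (π' (w : V))) = ρ (τ * g * τ) (ρ τ (π' (w : V))) := by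
      rw [hρ2, hρ2]
      have heq : τ * g * τ * τ = τ * g := by rw [mul_assoc (τ * g), hττ, mul_one]
      rw [heq]
    rw [h2, hΦeven _ hh hhw]
    have heq2 : τ * (τ * g * τ) = g * τ := by rw [← mul_assoc, ← mul_assoc, hττ, one_mul]
    rw [hρ2 τ (τ * g * τ), hρ2 g τ, heq2]
  -- Schur's lemma
  haveI : Nontrivial ↥W := Submodule.nontrivial_iff_ne_bot.mpr hWb
  obtain ⟨c, hc⟩ := Module.End.exists_eigenvalue (ψ : Module.End F ↥W)
  have hK'bot : Submodule.map W.subtype (Module.End.eigenspace ψ c) ≠ ⊥ := by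
    intro hcon
    apply hc
    rw [eq_bot_iff]
    intro k hk
    have h1 : (k : V) ∈ Submodule.map W.subtype (Module.End.eigenspace ψ c) :=
      ⟨k, hk, rfl⟩
    rw [hcon, Submodule.mem_bot] at h1
    simpa using Subtype.ext h1
  have hK'inv : ∀ g : Equiv.Perm (Fin n), Equiv.Perm.sign g = 1 → wreathPres n a g →
      ∀ v ∈ Submodule.map W.subtype (Module.End.eigenspace ψ c),
        ρ g v ∈ Submodule.map W.subtype (Module.End.eigenspace ψ c) := by
    intro g hsg hgw v hv
    obtain ⟨k, hk, rfl⟩ := hv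
    have hmem : ρ g ((k : ↥W) : V) ∈ W := hWinv g hgw _ k.2
    refine ⟨⟨ρ g ((k : ↥W) : V), hmem⟩, ?_, rfl⟩
    have hk' : ψ k = c • k := Module.End.mem_eigenspace_iff.mp hk
    apply Module.End.mem_eigenspace_iff.mpr
    apply Subtype.ext
    have h1 := hψcomm g hsg hgw k hmem
    rw [h1, hk']
    simp
  have hK'W : Submodule.map W.subtype (Module.End.eigenspace ψ c) = W := by
    rcases hminG _ (Submodule.map_subtype_le W _) hK'inv with h | h
    · exact absurd h hK'bot
    · exact h
  have hψscalar : ∀ w : ↥W, ψ w = c • w := by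
    intro w
    have h1 : ((w : ↥W) : V) ∈ Submodule.map W.subtype (Module.End.eigenspace ψ c) := by
      rw [hK'W]; exact w.2
    obtain ⟨k, hk, hkw⟩ := h1
    have h2 : k = w := Subtype.ext hkw
    rw [← h2]
    exact Module.End.mem_eigenspace_iff.mp hk
  -- the identity and c = 1
  have hI : ∀ x : V, ρ τ ((e (Submodule.Quotient.mk (ρ τ x)) : ↥W) : V)
      = c • ((e (Submodule.Quotient.mk x) : ↥W) : V) := by
    intro x
    have h1 := hψscalar (e (Submodule.Quotient.mk x))
    have h2 := hψE x
    rw [h1] at h2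
    rw [← h2]
    simp
  obtain ⟨w1, hw1W, hw1⟩ := (Submodule.ne_bot_iff W).mp hWb
  obtain ⟨z, hz⟩ := e.surjective ⟨w1, hw1W⟩
  obtain ⟨x1, rfl⟩ := Submodule.Quotient.mk_surjective W z
  have hEx1 : ((e (Submodule.Quotient.mk x1) : ↥W) : V) = w1 := by rw [hz]
  have hEne2 : ((e (Submodule.Quotient.mk (ρ τ x1)) : ↥W) : V) ≠ 0 := by
    intro h0
    have h2 := hI x1
    rw [h0, map_zero, hEx1] at h2
    apply hw1
    -- h2 : 0 = c • w1 ; also hI (ρ τ x1) relates; instead use injectivity: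
    -- from h2 : (0:V) = c • w1
    by_cases hc0 : c = 0
    · -- then ρ τ (E (ρτ x1)) = 0 anyway; but h0 already gives E(ρτ x1) = 0; need w1 = 0:
      -- use hI (ρ τ x1) : ρ τ (E (mk (ρ τ (ρ τ x1)))) = c • E(mk (ρ τ x1))
      have h3 := hI (ρ τ x1)
      rw [hρττ, hEx1, h0, smul_zero] at h3
      -- h3 : ρ τ w1 = 0
      have h4 := congrArg (ρ τ) h3
      rw [hρττ, map_zero] at h4
      exact h4
    · rcases smul_eq_zero.mp h2.symm with h | h
      · exact absurd h hc0
      · exact h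
  have hcc : c * c = 1 := by
    have hI1 := hI x1
    have hI2 := hI (ρ τ x1)
    rw [hρττ] at hI2
    -- hI2 : ρ τ (E x1) = c • E (ρ τ x1)
    have h3 := congrArg (ρ τ) hI1
    rw [hρττ, map_smul] at h3
    -- h3 : E (ρ τ x1) = c • ρ τ (E x1)
    rw [hI2, smul_smul] at h3
    -- h3 : E (ρ τ x1) = (c * c) • E (ρ τ x1)
    have h4 : (c * c - 1) • ((e (Submodule.Quotient.mk (ρ τ x1)) : ↥W) : V) = 0 := by
      rw [sub_smul, one_smul, ← h3, sub_self]
    rcases smul_eq_zero.mp h4 with h | h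
    · exact sub_eq_zero.mp h
    · exact absurd h hEne2
  have hc1 : c = 1 := by
    have h2F : (2 : F) = 0 := by
      have := CharP.cast_eq_zero F 2
      exact_mod_cast this
    have hsq : (c - 1) * (c - 1) = 0 := by
      calc (c - 1) * (c - 1) = c * c - 2 * c + 1 := by ring
        _ = 1 - 2 * c + 1 := by rw [hcc]
        _ = 2 - 2 * c := by ring
        _ = 2 * (1 - c) := by ring
        _ = 0 := by rw [h2F, zero_mul]
    have := mul_self_eq_zero.mp hsq
    have h3 : c = 1 := by
      have h4 := sub_eq_zero.mp this
      exact h4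
    exact h3
  have hEτ : ∀ x : V, ((e (Submodule.Quotient.mk (ρ τ x)) : ↥W) : V)
      = ρ τ ((e (Submodule.Quotient.mk x) : ↥W) : V) := by
    intro x
    have h2 := hI (ρ τ x)
    rw [hρττ, hc1, one_smul] at h2
    exact h2.symm
  have hΦall : ∀ g : Equiv.Perm (Fin n), wreathPres n a g →
      ∀ x : V, ((e (Submodule.Quotient.mk (ρ g x)) : ↥W) : V)
        = ρ g ((e (Submodule.Quotient.mk x) : ↥W) : V) := by
    intro g hgw x
    rcases hsigncases g with h | h
    · exact hΦeven g h hgw x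
    · have hgt : wreathPres n a (g * τ) := wreathPres_mul hgw hτw
      have heq : ρ g x = ρ (g * τ) (ρ τ x) := by rw [hρ2, hgττ]
      rw [heq, hΦeven _ h hgt, hEτ, hρ2, hgττ]
  exact ⟨W, hWinv, hWb, hWt,
    (fun W' hW'U hW'inv => hminG W' hW'U (fun g _ hgw => hW'inv g hgw)),
    hmax, ⟨e, fun g hgw v => hΦall g hgw v⟩⟩

end Stmt18P1
-- PART TWO main lemma
namespace Stmt18P2
open Stmt18 Stmt18B Stmt18M Stmt18C Submodule

set_option maxHeartbeats 2000000 in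
lemma main_two (F : Type) [Field F] [IsAlgClosed F] [CharP F 2]
    (a n : ℕ) (ha : 2 ≤ a) (hn : n = 2 * a)
    (V : Type) [AddCommGroup V] [Module F V]
    (ρ : Representation F (Equiv.Perm (Fin n)) V)
    (hirr : ∀ W : Submodule F V, (∀ g : Equiv.Perm (Fin n), ∀ v ∈ W, ρ g v ∈ W) →
      W = ⊥ ∨ W = ⊤)
    (Ep : Submodule F V) (hEpbot : Ep ≠ ⊥)
    (hmain1 : (∀ W : Submodule F V,
        (∀ g : Equiv.Perm (Fin n), wreathPres n a g → ∀ v ∈ W, ρ g v ∈ W) →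
        W = ⊥ ∨ W = ⊤)
      ∨ (∃ U : Submodule F V,
          (∀ g : Equiv.Perm (Fin n), wreathPres n a g → ∀ v ∈ U, ρ g v ∈ U) ∧
          U ≠ ⊥ ∧ U ≠ ⊤ ∧
          (∀ W : Submodule F V, W ≤ U →
            (∀ g : Equiv.Perm (Fin n), wreathPres n a g → ∀ v ∈ W, ρ g v ∈ W) →
            W = ⊥ ∨ W = U) ∧
          (∀ W : Submodule F V, U ≤ W →
            (∀ g : Equiv.Perm (Fin n), wreathPres n a g → ∀ v ∈ W, ρ g v ∈ W) →
            W = U ∨ W = ⊤) ∧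
          ∃ e : (V ⧸ U) ≃ₗ[F] ↥U, ∀ g : Equiv.Perm (Fin n), wreathPres n a g →
            ∀ v : V, ((e (Submodule.Quotient.mk (ρ g v)) : ↥U) : V)
              = ρ g ((e (Submodule.Quotient.mk v) : ↥U) : V))) :
    (∀ A B : Fin 3 → Submodule F V,
      (∀ i, B i ≤ A i) →
      (∀ i, ∀ g : Equiv.Perm (Fin n), saFix n a g → ∀ v ∈ A i, ρ g v ∈ A i) →
      (∀ i, ∀ g : Equiv.Perm (Fin n), saFix n a g → ∀ v ∈ B i, ρ g v ∈ B i) →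
      (∀ i, B i ≠ A i) →
      (∀ i, ∀ W : Submodule F V, B i ≤ W → W ≤ A i →
        (∀ g : Equiv.Perm (Fin n), saFix n a g → ∀ v ∈ W, ρ g v ∈ W) →
        W = B i ∨ W = A i) →
      ∃ i j : Fin 3, i ≠ j ∧
        ∃ e : (↥(A i) ⧸ (B i).comap (A i).subtype) ≃ₗ[F]
              (↥(A j) ⧸ (B j).comap (A j).subtype),
          ∀ g : Equiv.Perm (Fin n), saFix n a g →
            ∀ (v w : V) (hv : v ∈ A i) (hw : w ∈ A j)
              (hv' : ρ g v ∈ A i) (hw' : ρ g w ∈ A j),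
              e (Submodule.Quotient.mk ⟨v, hv⟩) = Submodule.Quotient.mk ⟨w, hw⟩ →
              e (Submodule.Quotient.mk ⟨ρ g v, hv'⟩) = Submodule.Quotient.mk ⟨ρ g w, hw'⟩) := by
  classical
  intro A B hBA hAinv hBinv hne hsimp
  -- finite dimensionality
  have hVfin : FiniteDimensional F V := by
    obtain ⟨v0, hv0mem, hv0⟩ := (Submodule.ne_bot_iff Ep).mp hEpbot
    set W0 : Submodule F V := Submodule.span F (Set.range fun g : Equiv.Perm (Fin n) => ρ g v0)
      with hW0
    have hρ2 : ∀ (σ σ' : Equiv.Perm (Fin n)) (x : V), ρ σ (ρ σ' x) = ρ (σ * σ') x := by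
      intro σ σ' x
      rw [map_mul]
      rfl
    have hW0inv : ∀ g : Equiv.Perm (Fin n), ∀ v ∈ W0, ρ g v ∈ W0 := by
      intro g v hv
      have h : Submodule.map (ρ g) W0 ≤ W0 := by
        rw [hW0, Submodule.map_span, Submodule.span_le]
        rintro _ ⟨_, ⟨h, rfl⟩, rfl⟩
        exact Submodule.subset_span ⟨g * h, (hρ2 g h v0).symm⟩
      exact h ⟨v, hv, rfl⟩
    have hW0top : W0 = ⊤ := by
      rcases hirr W0 hW0inv with h | h
      · exfalso
        apply hv0
        have h2 : v0 ∈ W0 := Submodule.subset_span ⟨1, show ρ 1 v0 = v0 by rw [map_one]; rfl⟩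
        rw [h] at h2
        simpa using h2
      · exact h
    have hfg : (⊤ : Submodule F V).FG := by
      refine ⟨(Set.finite_range fun g : Equiv.Perm (Fin n) => ρ g v0).toFinset, ?_⟩
      rw [Set.Finite.coe_toFinset, ← hW0, hW0top]
    rw [← Module.finite_def] at hfg
    exact hfg
  have key : ∃ SS : Bool → Submodule F V, (∀ b, Stab ρ (saFix n a) (SS b)) ∧
      (∀ i : Fin 3, ∃ b : Bool, IsoRel ρ (P := saFix n a) (A i) (B i) (SS b) ⊥) := by
    rcases hmain1 with hsimple | hU
    · -- V is wreath-simple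
      have htopb : (⊤ : Submodule F V) ≠ ⊥ := by
        intro hc
        apply hEpbot
        rw [eq_bot_iff, ← hc]
        exact le_top
      obtain ⟨SS, hSSinv, hSSb, hSSmin, hXY, htermInv, htermAtom, htermIso⟩ :=
        Stmt18C.clayer ρ ha hn ⊤ (fun g _ v _ => trivial) htopb
          (fun Y _ hYinv => hsimple Y hYinv)
      refine ⟨SS, hSSinv, ?_⟩
      intro i
      obtain ⟨p, _, hpbot, hiso⟩ := L1 ρ (A i) (B i) (hAinv i) (hBinv i) (hBA i) (hne i)
        (fun W hW hBW hWA => hsimp i W hBW hWA hW) Finset.univ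
        (fun p : Equiv.Perm (Fin n) × Bool =>
          if sbFix n a p.1 then Submodule.map (ρ p.1) (SS p.2) else ⊥)
        (fun p _ => htermInv p) (fun p _ => htermAtom p)
        (by calc A i ≤ ⊤ := le_top
              _ ≤ B i ⊔ _ := by rw [← hXY]; exact le_sup_right)
      have hp : sbFix n a p.1 := by
        by_contra h
        exact hpbot (if_neg h)
      rw [if_pos hp] at hiso
      have hmid := htermInv p
      rw [if_pos hp] at hmid
      exact ⟨p.2, IsoRel_trans ρ hmid hiso (htermIso p hp)⟩
    · -- the two-factor case
      obtain ⟨U, hUinv, hUb, hUt, hUmin, hUmax, e, he⟩ := hU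
      obtain ⟨SS, hSSinv, hSSb, hSSmin, hXY, htermInv, htermAtom, htermIso⟩ :=
        Stmt18C.clayer ρ ha hn U hUinv hUb (fun Y hYU hYinv => hUmin Y hYU hYinv)
      set θ : V →ₗ[F] V := U.subtype.comp (e.toLinearMap.comp U.mkQ) with hθdef
      have hθapp : ∀ v : V, θ v = ((e (Submodule.Quotient.mk v) : ↥U) : V) := fun v => rfl
      have hθcomm : ∀ g : Equiv.Perm (Fin n), wreathPres n a g → ∀ v : V,
          θ (ρ g v) = ρ g (θ v) := by
        intro g hg v
        rw [hθapp, hθapp]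
        exact he g hg v
      have hθmem : ∀ v : V, θ v ∈ U := fun v => (e (Submodule.Quotient.mk v)).2
      have hθker : ∀ v : V, θ v = 0 → v ∈ U := by
        intro v hv
        rw [hθapp] at hv
        have h1 : e (Submodule.Quotient.mk v) = 0 := by
          exact_mod_cast hv
        have h2 : (Submodule.Quotient.mk v : V ⧸ U) = 0 :=
          (LinearEquiv.map_eq_zero_iff e).mp h1
        exact (Submodule.Quotient.mk_eq_zero U).mp h2
      have hUsa : Stab ρ (saFix n a) U := fun g hg => hUinv g (saFix_wreathPres ha hn hg)
      refine ⟨SS, hSSinv, ?_⟩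
      intro i
      have hstep : ∀ A' B' : Submodule F V, Stab ρ (saFix n a) A' →
          Stab ρ (saFix n a) B' → B' ≤ A' → B' ≠ A' →
          (∀ W, Stab ρ (saFix n a) W → B' ≤ W → W ≤ A' → W = B' ∨ W = A') →
          A' ≤ U → IsoRel ρ (P := saFix n a) (A i) (B i) A' B' →
          ∃ b : Bool, IsoRel ρ (P := saFix n a) (A i) (B i) (SS b) ⊥ := by
        intro A' B' hA' hB' hB'A' hne' hsimp' hA'U hiso
        obtain ⟨p, _, hpbot, hiso2⟩ := L1 ρ A' B' hA' hB' hB'A' hne' hsimp' Finset.univ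
          (fun p : Equiv.Perm (Fin n) × Bool =>
            if sbFix n a p.1 then Submodule.map (ρ p.1) (SS p.2) else ⊥)
          (fun p _ => htermInv p) (fun p _ => htermAtom p)
          (by calc A' ≤ U := hA'U
                _ ≤ B' ⊔ _ := by rw [← hXY]; exact le_sup_right)
        have hp : sbFix n a p.1 := by
          by_contra h
          exact hpbot (if_neg h)
        rw [if_pos hp] at hiso2
        have hmid := htermInv p
        rw [if_pos hp] at hmid
        refine ⟨p.2, ?_⟩
        have hiso3 := IsoRel_trans ρ hA' hiso hiso2
        exact IsoRel_trans ρ hmid hiso3 (htermIso p hp)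
      have hDinv : Stab ρ (saFix n a) (B i ⊔ (A i ⊓ U)) :=
        Stab_sup ρ (hBinv i) (Stab_inf ρ (hAinv i) hUsa)
      rcases hsimp i (B i ⊔ (A i ⊓ U)) le_sup_left (sup_le (hBA i) inf_le_left)
        (fun g hg v hv => hDinv g hg v hv) with hD | hD
      · -- quotient case : A i ⊓ U ≤ B i
        have hB2inv : Stab ρ (saFix n a) (B i ⊔ U) := Stab_sup ρ (hBinv i) hUsa
        have hA2inv : Stab ρ (saFix n a) (A i ⊔ (B i ⊔ U)) := Stab_sup ρ (hAinv i) hB2inv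
        have hmodD : A i ⊓ (B i ⊔ U) = B i := by
          rw [sup_comm (B i) U, ← inf_sup_assoc_of_le _ (hBA i), sup_comm]
          exact hD
        have hiso0 : IsoRel ρ (P := saFix n a) (A i) (B i) (A i ⊔ (B i ⊔ U)) (B i ⊔ U) := by
          have h0 := noetherIso ρ (A i) (B i ⊔ U) (hAinv i) hB2inv
          rwa [hmodD] at h0
        have hcommθ : ∀ g : Equiv.Perm (Fin n), saFix n a g → ∀ v : V,
            θ (ρ g v) = ρ g (θ v) := fun g hg v => hθcomm g (saFix_wreathPres ha hn hg) v
        have hA3inv : Stab ρ (saFix n a) (Submodule.map θ (A i ⊔ (B i ⊔ U))) :=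
          Stab_map ρ hcommθ hA2inv
        have hB3inv : Stab ρ (saFix n a) (Submodule.map θ (B i ⊔ U)) :=
          Stab_map ρ hcommθ hB2inv
        have hkey2 : ∀ x ∈ A i ⊔ (B i ⊔ U), θ x ∈ Submodule.map θ (B i ⊔ U) → x ∈ B i ⊔ U := by
          intro x _ hθx
          obtain ⟨b, hb, hbb⟩ := hθx
          have h1 : θ (x - b) = 0 := by rw [map_sub, hbb, sub_self]
          have h2 : x - b ∈ U := hθker _ h1
          have h3 : x = b + (x - b) := by abel
          rw [h3]
          exact add_mem hb (le_sup_right (α := Submodule F V) h2)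
        have hiso1 : IsoRel ρ (P := saFix n a) (A i ⊔ (B i ⊔ U)) (B i ⊔ U)
            (Submodule.map θ (A i ⊔ (B i ⊔ U))) (Submodule.map θ (B i ⊔ U)) := by
          apply buildIso ρ (saFix n a) θ _ _ _ _ le_sup_right
            (Submodule.map_mono le_sup_right)
            (fun x hx => Submodule.mem_map_of_mem hx)
            (fun x hx => ⟨fun h => hkey2 x hx h, fun h => Submodule.mem_map_of_mem h⟩)
            ?_ hB3inv hcommθ
          rintro _ ⟨x, hx, rfl⟩
          exact ⟨x, hx, by rw [sub_self]; exact zero_mem _⟩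
        have hne3 : Submodule.map θ (B i ⊔ U) ≠ Submodule.map θ (A i ⊔ (B i ⊔ U)) := by
          intro hc
          apply hne i
          have h1 : A i ≤ B i ⊔ U := by
            intro x hx
            have hx2 : x ∈ A i ⊔ (B i ⊔ U) := le_sup_left (α := Submodule F V) hx
            have h2 : θ x ∈ Submodule.map θ (B i ⊔ U) := by
              rw [hc]
              exact Submodule.mem_map_of_mem hx2
            exact hkey2 x hx2 h2
          have h2 : A i ⊓ (B i ⊔ U) = A i := inf_eq_left.mpr h1
          rw [hmodD] at h2
          exact h2
        have hA2simp : ∀ W, Stab ρ (saFix n a) W → B i ⊔ U ≤ W → W ≤ A i ⊔ (B i ⊔ U) →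
            W = B i ⊔ U ∨ W = A i ⊔ (B i ⊔ U) := by
          intro W hW hB2W hWA2
          rcases hsimp i (W ⊓ A i)
            (le_inf ((le_sup_left (α := Submodule F V)).trans hB2W) (hBA i)) inf_le_right
            (fun g hg v hv => (Stab_inf ρ hW (hAinv i)) g hg v hv) with h | h
          · left
            have h1 : (W ⊓ A i) ⊔ (B i ⊔ U) = W ⊓ (A i ⊔ (B i ⊔ U)) :=
              inf_sup_assoc_of_le _ hB2W
            rw [h, inf_eq_left.mpr hWA2] at h1
            rw [← h1]
            exact sup_eq_right.mpr le_sup_left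
          · right
            have h1 : A i ≤ W := h ▸ inf_le_left
            exact le_antisymm hWA2 (sup_le h1 hB2W)
        have hA3simp : ∀ W, Stab ρ (saFix n a) W → Submodule.map θ (B i ⊔ U) ≤ W →
            W ≤ Submodule.map θ (A i ⊔ (B i ⊔ U)) →
            W = Submodule.map θ (B i ⊔ U) ∨ W = Submodule.map θ (A i ⊔ (B i ⊔ U)) := by
          intro W hW hB3W hWA3
          have hW'inv : Stab ρ (saFix n a) (Submodule.comap θ W ⊓ (A i ⊔ (B i ⊔ U))) :=
            Stab_inf ρ (Stab_comap ρ hcommθ hW) hA2inv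
          have hB2W' : B i ⊔ U ≤ Submodule.comap θ W ⊓ (A i ⊔ (B i ⊔ U)) := by
            intro b hb
            exact ⟨hB3W (Submodule.mem_map_of_mem hb), le_sup_right (α := Submodule F V) hb⟩
          have hmapW' : Submodule.map θ (Submodule.comap θ W ⊓ (A i ⊔ (B i ⊔ U))) = W := by
            apply le_antisymm
            · rintro _ ⟨x, hx, rfl⟩
              exact hx.1
            · intro w hw
              obtain ⟨x, hx, rfl⟩ := hWA3 hw
              exact ⟨x, ⟨hw, hx⟩, rfl⟩
          rcases hA2simp _ hW'inv hB2W' inf_le_right with h | h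
          · left
            rw [← hmapW', h]
          · right
            rw [← hmapW', h]
        apply hstep (Submodule.map θ (A i ⊔ (B i ⊔ U))) (Submodule.map θ (B i ⊔ U))
          hA3inv hB3inv (Submodule.map_mono le_sup_right) hne3 hA3simp
          (by rintro _ ⟨x, _, rfl⟩; exact hθmem x)
          (IsoRel_trans ρ hA2inv hiso0 hiso1)
      · -- submodule case : A i = B i ⊔ (A i ⊓ U)
        have hA'inv : Stab ρ (saFix n a) (A i ⊓ U) := Stab_inf ρ (hAinv i) hUsa
        have hiso0 : IsoRel ρ (P := saFix n a) (A i ⊓ U) ((A i ⊓ U) ⊓ B i) (A i) (B i) := by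
          have h0 := noetherIso ρ (A i ⊓ U) (B i) hA'inv (hBinv i)
          have heq1 : (A i ⊓ U) ⊔ B i = A i := by
            rw [sup_comm]
            exact hD
          rwa [heq1] at h0
        have hne' : (A i ⊓ U) ⊓ B i ≠ A i ⊓ U := by
          intro hc
          have h1 : A i ⊓ U ≤ B i := hc.symm.le.trans inf_le_right
          have h2 : B i ⊔ (A i ⊓ U) = B i := sup_eq_left.mpr h1
          exact hne i (h2.symm.trans hD)
        have hsimp' : ∀ W, Stab ρ (saFix n a) W → (A i ⊓ U) ⊓ B i ≤ W → W ≤ A i ⊓ U →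
            W = (A i ⊓ U) ⊓ B i ∨ W = A i ⊓ U := by
          intro W hW hBW hWA
          rcases hsimp i (W ⊔ B i) le_sup_right
            (sup_le (hWA.trans inf_le_left) (hBA i))
            (fun g hg v hv => (Stab_sup ρ hW (hBinv i)) g hg v hv) with h | h
          · left
            apply le_antisymm _ hBW
            have h1 : W ≤ B i := (le_sup_left (α := Submodule F V)).trans h.le
            exact le_inf hWA h1
          · right
            apply le_antisymm hWA
            have h1 : A i ⊓ U ≤ W ⊔ B i := by
              rw [h]
              exact inf_le_left
            have h2 : ((A i ⊓ U) ⊓ B i) ⊔ W = (A i ⊓ U) ⊓ (B i ⊔ W) :=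
              inf_sup_assoc_of_le _ hWA
            rw [sup_comm (B i) W] at h2
            have h3 : (A i ⊓ U) ⊓ (W ⊔ B i) = A i ⊓ U := inf_eq_left.mpr h1
            rw [h3] at h2
            rw [← h2]
            exact sup_le hBW le_rfl
        apply hstep (A i ⊓ U) ((A i ⊓ U) ⊓ B i) hA'inv (Stab_inf ρ hA'inv (hBinv i))
          inf_le_left hne' hsimp' inf_le_right (IsoRel_symm ρ hiso0)
  obtain ⟨SS, hSSinv, hkey⟩ := key
  choose k hk using hkey
  obtain ⟨i, j, hij, hkij⟩ := Fintype.exists_ne_map_eq_of_card_lt k (by simp)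
  refine ⟨i, j, hij, ?_⟩
  have h1 := hk i
  rw [hkij] at h1
  obtain ⟨efin, hefin⟩ := IsoRel_trans ρ (hSSinv (k j)) h1 (IsoRel_symm ρ (hk j))
  exact ⟨efin, hefin⟩

end Stmt18P2

/-- Let `p = 2`, `n = 2a`, and let `D^λ` (for `λ ∈ P^A_2(n)`) be an irreducible
`F S_n`-module whose restriction to `A_n` splits as `E^λ_+ ⊕ E^λ_−` with `E^λ_±`
irreducible `A_n`-modules.  If `E^λ_+` restricted to `G_{a,2} = (S_a ≀ S_2) ∩ A_n` is
irreducible, then `D^λ` restricted to `S_a ≀ S_2` is either irreducible or has exactly two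
composition factors which are isomorphic to each other; consequently `D^λ` restricted to
`S_a` has at most two isomorphism classes of composition factors. -/
theorem stmt_18 (F : Type) [Field F] [IsAlgClosed F] [CharP F 2]
    (a n : ℕ) (ha : 2 ≤ a) (hn : n = 2 * a)
    (V : Type) [AddCommGroup V] [Module F V]
    (ρ : Representation F (Equiv.Perm (Fin n)) V)
    (hirr : ∀ W : Submodule F V, (∀ g : Equiv.Perm (Fin n), ∀ v ∈ W, ρ g v ∈ W) →
      W = ⊥ ∨ W = ⊤)
    (Ep Em : Submodule F V)
    (hEpinv : ∀ g ∈ alternatingGroup (Fin n), ∀ v ∈ Ep, ρ g v ∈ Ep)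
    (hEminv : ∀ g ∈ alternatingGroup (Fin n), ∀ v ∈ Em, ρ g v ∈ Em)
    (hEpbot : Ep ≠ ⊥) (hEmbot : Em ≠ ⊥) (hdisj : Ep ⊓ Em = ⊥) (hsup : Ep ⊔ Em = ⊤)
    (hEpirr : ∀ W : Submodule F V, W ≤ Ep →
      (∀ g ∈ alternatingGroup (Fin n), ∀ v ∈ W, ρ g v ∈ W) → W = ⊥ ∨ W = Ep)
    (hEmirr : ∀ W : Submodule F V, W ≤ Em →
      (∀ g ∈ alternatingGroup (Fin n), ∀ v ∈ W, ρ g v ∈ W) → W = ⊥ ∨ W = Em)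
    (hrestr : ∀ W : Submodule F V, W ≤ Ep →
      (∀ g ∈ alternatingGroup (Fin n), wreathPres n a g → ∀ v ∈ W, ρ g v ∈ W) →
      W = ⊥ ∨ W = Ep) :
    -- `D^λ↓_{S_a ≀ S_2}` is irreducible, or has exactly two composition factors,
    -- isomorphic to each other:
    ((∀ W : Submodule F V, (∀ g : Equiv.Perm (Fin n), wreathPres n a g → ∀ v ∈ W, ρ g v ∈ W) →
        W = ⊥ ∨ W = ⊤)
      ∨ (∃ U : Submodule F V,
          (∀ g : Equiv.Perm (Fin n), wreathPres n a g → ∀ v ∈ U, ρ g v ∈ U) ∧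
          U ≠ ⊥ ∧ U ≠ ⊤ ∧
          (∀ W : Submodule F V, W ≤ U →
            (∀ g : Equiv.Perm (Fin n), wreathPres n a g → ∀ v ∈ W, ρ g v ∈ W) →
            W = ⊥ ∨ W = U) ∧
          (∀ W : Submodule F V, U ≤ W →
            (∀ g : Equiv.Perm (Fin n), wreathPres n a g → ∀ v ∈ W, ρ g v ∈ W) →
            W = U ∨ W = ⊤) ∧
          ∃ e : (V ⧸ U) ≃ₗ[F] ↥U, ∀ g : Equiv.Perm (Fin n), wreathPres n a g →
            ∀ v : V, ((e (Submodule.Quotient.mk (ρ g v)) : ↥U) : V)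
              = ρ g ((e (Submodule.Quotient.mk v) : ↥U) : V))) ∧
    -- `D^λ↓_{S_a}` has at most two isomorphism classes of composition factors: among any
    -- three simple `S_a`-subquotients, two are `S_a`-equivariantly isomorphic:
    (∀ A B : Fin 3 → Submodule F V,
      (∀ i, B i ≤ A i) →
      (∀ i, ∀ g : Equiv.Perm (Fin n), saFix n a g → ∀ v ∈ A i, ρ g v ∈ A i) →
      (∀ i, ∀ g : Equiv.Perm (Fin n), saFix n a g → ∀ v ∈ B i, ρ g v ∈ B i) →
      (∀ i, B i ≠ A i) →
      (∀ i, ∀ W : Submodule F V, B i ≤ W → W ≤ A i →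
        (∀ g : Equiv.Perm (Fin n), saFix n a g → ∀ v ∈ W, ρ g v ∈ W) →
        W = B i ∨ W = A i) →
      ∃ i j : Fin 3, i ≠ j ∧
        ∃ e : (↥(A i) ⧸ (B i).comap (A i).subtype) ≃ₗ[F]
              (↥(A j) ⧸ (B j).comap (A j).subtype),
          ∀ g : Equiv.Perm (Fin n), saFix n a g →
            ∀ (v w : V) (hv : v ∈ A i) (hw : w ∈ A j)
              (hv' : ρ g v ∈ A i) (hw' : ρ g w ∈ A j),
              e (Submodule.Quotient.mk ⟨v, hv⟩) = Submodule.Quotient.mk ⟨w, hw⟩ →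
              e (Submodule.Quotient.mk ⟨ρ g v, hv'⟩) = Submodule.Quotient.mk ⟨ρ g w, hw'⟩) := by
  have h1 := Stmt18P1.main_one F a n ha hn V ρ hirr Ep Em hEpinv hEminv hEpbot hEmbot
    hdisj hsup hEpirr hEmirr hrestr
  exact ⟨h1, Stmt18P2.main_two F a n ha hn V ρ hirr Ep hEpbot h1⟩
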